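/- arXiv:2509.15554 — 4 statements merged into one kernel-verified Lean document; each statement's English description precedes it below -/
import Mathlib

section
/- For every z in the open upper half-plane (Im z > 0) there exists exactly one complex number b with Im b > 0 satisfying the Marcenko–Pastur-type equation b = (1/N) * Σ_{i=1}^{L} N_i / (λ_i (1 − c − c z b) − z). -/
open Finset Complex

namespace MPaux

variable {L : ℕ} (N : ℕ) (lam : Fin L → ℝ) (Ni : Fin L → ℕ) (c : ℝ) (z : ℂ)

/-- The denominator `λᵢ (1 - c - c z b) - z`. -/
noncomputable def Dd (b : ℂ) (i : Fin L) : ℂ :=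
  (lam i : ℂ) * (1 - (c : ℂ) - (c : ℂ) * z * b) - z

/-- The fixed point map of the Marcenko–Pastur equation. -/
noncomputable def G (b : ℂ) : ℂ := (1 / (N : ℂ)) * ∑ i, (Ni i : ℂ) / Dd lam c z b i

noncomputable def Bq (b : ℂ) : ℝ :=
  (1 / (N : ℝ)) * ∑ i, (Ni i : ℝ) * lam i / Complex.normSq (Dd lam c z b i)

noncomputable def Qq (b : ℂ) : ℝ :=
  (1 / (N : ℝ)) * ∑ i, (Ni i : ℝ) / Complex.normSq (Dd lam c z b i)

/-- The uniform contraction gap. -/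
noncomputable def eps (c : ℝ) (z : ℂ) : ℝ := (1 - c) * z.im ^ 2 / (c * Complex.normSq z)

lemma z_ne_zero (hz : 0 < z.im) : z ≠ 0 := fun h => by rw [h] at hz; simp at hz

lemma normSq_z_pos (hz : 0 < z.im) : 0 < Complex.normSq z :=
  Complex.normSq_pos.2 (z_ne_zero z hz)

lemma eps_pos (hc0 : 0 < c) (hc1 : c < 1) (hz : 0 < z.im) : 0 < eps c z := by
  have := normSq_z_pos z hz
  have h1 : 0 < 1 - c := by linarith
  rw [eps]; positivity

lemma Dd_im (b : ℂ) (i : Fin L) :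
    (Dd lam c z b i).im = -(lam i * (c * (z * b).im) + z.im) := by
  simp only [Dd, Complex.sub_im, Complex.mul_im, Complex.ofReal_re, Complex.ofReal_im,
    Complex.sub_re, Complex.one_re, Complex.one_im, Complex.mul_re, Complex.sub_im]
  ring

lemma Dd_re (b : ℂ) (i : Fin L) :
    (Dd lam c z b i).re = lam i * (1 - c - c * (z * b).re) - z.re := by
  simp only [Dd, Complex.sub_im, Complex.mul_im, Complex.ofReal_re, Complex.ofReal_im,
    Complex.sub_re, Complex.one_re, Complex.one_im, Complex.mul_re, Complex.sub_im]
  ring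

lemma G_im (b : ℂ) :
    (G N lam Ni c z b).im
      = c * (z * b).im * Bq N lam Ni c z b + z.im * Qq N lam Ni c z b := by
  have h1 : (1 / (N : ℂ)) = ((1 / (N : ℝ) : ℝ) : ℂ) := by push_cast; ring
  rw [G, h1, Complex.im_ofReal_mul, Complex.im_sum, Bq, Qq, Finset.mul_sum, Finset.mul_sum,
    Finset.mul_sum, Finset.mul_sum, Finset.mul_sum, ← Finset.sum_add_distrib]
  refine Finset.sum_congr rfl fun i _ => ?_
  rw [Complex.div_im, Dd_im]
  simp only [Complex.natCast_re, Complex.natCast_im]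
  ring

lemma zG_im (b : ℂ) :
    (z * G N lam Ni c z b).im
      = ((1 - c) * z.im + c * Complex.normSq z * b.im) * Bq N lam Ni c z b := by
  have h1 : z * G N lam Ni c z b
      = ∑ i, ((1 / (N : ℝ) : ℝ) : ℂ) * (z * ((Ni i : ℂ) / Dd lam c z b i)) := by
    rw [G, Finset.mul_sum, Finset.mul_sum]
    exact Finset.sum_congr rfl fun i _ => by push_cast; ring
  rw [h1, Complex.im_sum, Bq, Finset.mul_sum, Finset.mul_sum]
  refine Finset.sum_congr rfl fun i _ => ?_
  rw [Complex.im_ofReal_mul, mul_div_assoc, Complex.mul_im, Complex.div_im, Complex.div_re,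
    Dd_im, Dd_re]
  simp only [Complex.natCast_re, Complex.natCast_im, Complex.normSq_apply, Complex.mul_re,
    Complex.mul_im]
  ring

lemma Dd_im_neg (hlam_pos : ∀ i, 0 < lam i) (hc0 : 0 < c)
    {b : ℂ} (hb : 0 ≤ (z * b).im) (i : Fin L) : (Dd lam c z b i).im ≤ -z.im := by
  rw [Dd_im]
  nlinarith [hlam_pos i, mul_nonneg (le_of_lt hc0) hb]

lemma Dd_ne_zero (hlam_pos : ∀ i, 0 < lam i) (hc0 : 0 < c) (hz : 0 < z.im)
    {b : ℂ} (hb : 0 ≤ (z * b).im) (i : Fin L) : Dd lam c z b i ≠ 0 := by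
  intro h
  have := Dd_im_neg lam c z hlam_pos hc0 hb i
  rw [h, Complex.zero_im] at this
  linarith

lemma abs_Dd_ge (hlam_pos : ∀ i, 0 < lam i) (hc0 : 0 < c)
    {b : ℂ} (hb : 0 ≤ (z * b).im) (i : Fin L) :
    z.im ≤ ‖Dd lam c z b i‖ := by
  have h1 := Complex.abs_im_le_norm (Dd lam c z b i)
  have h2 := Dd_im_neg lam c z hlam_pos hc0 (b := b) hb i
  rw [abs_le] at h1
  linarith [h1.1]

lemma Bq_nonneg (hlam_pos : ∀ i, 0 < lam i) (b : ℂ) : 0 ≤ Bq N lam Ni c z b := by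
  rw [Bq]
  refine mul_nonneg (by positivity) (Finset.sum_nonneg fun i _ => ?_)
  have h1 := Complex.normSq_nonneg (Dd lam c z b i)
  have h2 := (hlam_pos i).le
  positivity

lemma Qq_pos (hL : 0 < L) (hN : 0 < N) (hNi : ∀ i, 0 < Ni i)
    {b : ℂ} (hD : ∀ i, Dd lam c z b i ≠ 0) : 0 < Qq N lam Ni c z b := by
  have hNe : (Finset.univ : Finset (Fin L)).Nonempty := by
    simpa [Finset.univ_nonempty_iff] using Fin.pos_iff_nonempty.mp hL
  have hNpos : (0:ℝ) < N := by exact_mod_cast hN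
  refine mul_pos (by positivity) (Finset.sum_pos (fun i _ => ?_) hNe)
  have h2 := Complex.normSq_pos.2 (hD i)
  have hNi' : (0:ℝ) < Ni i := by exact_mod_cast hNi i
  positivity

lemma Bq_pos (hlam_pos : ∀ i, 0 < lam i) (hL : 0 < L) (hN : 0 < N) (hNi : ∀ i, 0 < Ni i)
    {b : ℂ} (hD : ∀ i, Dd lam c z b i ≠ 0) : 0 < Bq N lam Ni c z b := by
  have hNe : (Finset.univ : Finset (Fin L)).Nonempty := by
    simpa [Finset.univ_nonempty_iff] using Fin.pos_iff_nonempty.mp hL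
  have hNpos : (0:ℝ) < N := by exact_mod_cast hN
  refine mul_pos (by positivity) (Finset.sum_pos (fun i _ => ?_) hNe)
  have h2 := Complex.normSq_pos.2 (hD i)
  have hNi' : (0:ℝ) < Ni i := by exact_mod_cast hNi i
  have h3 := hlam_pos i
  positivity

lemma abs_G_le (hlam_pos : ∀ i, 0 < lam i) (hc0 : 0 < c) (hz : 0 < z.im)
    (hN : 0 < N) (hsum : ∑ i, Ni i = N) {b : ℂ} (hb : 0 ≤ (z * b).im) :
    ‖G N lam Ni c z b‖ ≤ 1 / z.im := by
  have hNpos : (0:ℝ) < N := by exact_mod_cast hN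
  rw [G, norm_mul]
  have h1 : ‖1 / (N:ℂ)‖ = 1 / (N:ℝ) := by
    rw [norm_div, norm_one, Complex.norm_natCast]
  rw [h1]
  have h2 : ‖∑ i, (Ni i : ℂ) / Dd lam c z b i‖ ≤ ∑ i, (Ni i : ℝ) / z.im := by
    refine (norm_sum_le _ _).trans ?_
    refine Finset.sum_le_sum fun i _ => ?_
    rw [norm_div, Complex.norm_natCast]
    exact div_le_div_of_nonneg_left (by positivity) hz (abs_Dd_ge lam c z hlam_pos hc0 hb i)
  calc 1 / (N:ℝ) * ‖∑ i, (Ni i : ℂ) / Dd lam c z b i‖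
      ≤ 1 / (N:ℝ) * ∑ i, (Ni i : ℝ) / z.im :=
        mul_le_mul_of_nonneg_left h2 (by positivity)
    _ = 1 / z.im := by
        rw [← Finset.sum_div]
        have h3 : (∑ i, (Ni i : ℝ)) = (N:ℝ) := by exact_mod_cast congrArg (Nat.cast : ℕ → ℝ) hsum
        rw [h3]
        field_simp

lemma im_neg_of_Dd_zero (hlam_pos : ∀ i, 0 < lam i) (hc0 : 0 < c) (hc1 : c < 1) (hz : 0 < z.im)
    {b : ℂ} {i : Fin L} (h : Dd lam c z b i = 0) : b.im < 0 := by
  have hlc : (lam i : ℂ) ≠ 0 := by exact_mod_cast (hlam_pos i).ne'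
  have hcne : (c : ℂ) ≠ 0 := by exact_mod_cast hc0.ne'
  have hzne := z_ne_zero z hz
  have hb : b = ((lam i : ℂ) * (1 - (c:ℂ)) - z) / ((lam i : ℂ) * (c:ℂ) * z) := by
    rw [Dd] at h
    field_simp
    linear_combination -h
  have hnsq : 0 < Complex.normSq ((lam i : ℂ) * (c:ℂ) * z) :=
    Complex.normSq_pos.2 (by exact mul_ne_zero (mul_ne_zero hlc hcne) hzne)
  rw [hb, Complex.div_im]
  rw [div_sub_div_same, div_neg_iff]
  right
  constructor
  · simp only [Complex.sub_im, Complex.sub_re, Complex.mul_im, Complex.mul_re,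
      Complex.ofReal_re, Complex.ofReal_im, Complex.one_re, Complex.one_im]
    nlinarith [mul_pos (mul_pos (mul_pos (mul_pos (hlam_pos i) (hlam_pos i)) hc0)
      (by linarith : (0:ℝ) < 1 - c)) hz]
  · exact hnsq

lemma abs_Dd_le (hc0 : 0 < c) (hz : 0 < z.im) {Λ : ℝ} (hΛ : ∀ i, lam i ≤ Λ)
    (hlam_pos : ∀ i, 0 < lam i)
    {b : ℂ} (hb : ‖b‖ ≤ 1 / z.im) (i : Fin L) :
    ‖Dd lam c z b i‖
      ≤ Λ * (1 + c + c * ‖z‖ / z.im) + ‖z‖ := by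
  have h0 : (0:ℝ) < lam i := hlam_pos i
  have hΛ0 : 0 < Λ := lt_of_lt_of_le h0 (hΛ i)
  have h1 : ‖Dd lam c z b i‖
      ≤ lam i * ‖1 - (c:ℂ) - (c:ℂ) * z * b‖ + ‖z‖ := by
    rw [Dd]
    refine (norm_sub_le _ _).trans ?_
    rw [norm_mul, Complex.norm_real, Real.norm_eq_abs, abs_of_pos h0]
  have h2 : ‖1 - (c:ℂ) - (c:ℂ) * z * b‖ ≤ 1 + c + c * ‖z‖ / z.im := by
    refine (norm_sub_le _ _).trans ?_
    have h3 : ‖(1:ℂ) - (c:ℂ)‖ ≤ 1 + c := by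
      refine (norm_sub_le _ _).trans ?_
      simp [Complex.norm_real, abs_of_pos hc0]
    have h4 : ‖(c:ℂ) * z * b‖ ≤ c * ‖z‖ / z.im := by
      rw [norm_mul, norm_mul, Complex.norm_real, Real.norm_eq_abs, abs_of_pos hc0]
      rw [mul_assoc, div_eq_mul_one_div (c * ‖z‖) z.im, mul_assoc]
      refine mul_le_mul_of_nonneg_left ?_ hc0.le
      exact mul_le_mul_of_nonneg_left hb (norm_nonneg z)
    linarith
  calc ‖Dd lam c z b i‖
      ≤ lam i * ‖1 - (c:ℂ) - (c:ℂ) * z * b‖ + ‖z‖ := h1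
    _ ≤ Λ * (1 + c + c * ‖z‖ / z.im) + ‖z‖ := by
        have := norm_nonneg (1 - (c:ℂ) - (c:ℂ) * z * b)
        have h5 : 0 ≤ 1 + c + c * ‖z‖ / z.im := by positivity
        nlinarith [hΛ i, h2]

lemma Qq_lower (hN : 0 < N) (hsum : ∑ i, Ni i = N) {b : ℂ} {CD : ℝ} (hCD : 0 < CD)
    (h0 : ∀ i, Dd lam c z b i ≠ 0)
    (h : ∀ i, ‖Dd lam c z b i‖ ≤ CD) :
    1 / CD ^ 2 ≤ Qq N lam Ni c z b := by
  have hNpos : (0:ℝ) < N := by exact_mod_cast hN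
  have h1 : ∀ i : Fin L, (Ni i : ℝ) / CD ^ 2 ≤ (Ni i : ℝ) / Complex.normSq (Dd lam c z b i) := by
    intro i
    have h2 : Complex.normSq (Dd lam c z b i) ≤ CD ^ 2 := by
      rw [← Complex.sq_norm]
      exact pow_le_pow_left₀ (norm_nonneg _) (h i) 2
    have h3 : 0 < Complex.normSq (Dd lam c z b i) := Complex.normSq_pos.2 (h0 i)
    exact div_le_div_of_nonneg_left (by positivity) h3 h2
  calc 1 / CD ^ 2 = (1 / (N:ℝ)) * ∑ i, (Ni i : ℝ) / CD ^ 2 := by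
        rw [← Finset.sum_div]
        have h3 : (∑ i, (Ni i : ℝ)) = (N:ℝ) := by exact_mod_cast congrArg (Nat.cast : ℕ → ℝ) hsum
        rw [h3]; field_simp
    _ ≤ Qq N lam Ni c z b := by
        rw [Qq]
        exact mul_le_mul_of_nonneg_left (Finset.sum_le_sum fun i _ => h1 i) (by positivity)

lemma continuousAt_G {b : ℂ} (hD : ∀ i, Dd lam c z b i ≠ 0) :
    ContinuousAt (G N lam Ni c z) b := by
  rw [show G N lam Ni c z = fun b => (1 / (N : ℂ)) * ∑ i, (Ni i : ℂ) / Dd lam c z b i from rfl]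
  refine ContinuousAt.mul continuousAt_const ?_
  refine tendsto_finset_sum _ fun i _ => ?_
  refine ContinuousAt.div continuousAt_const ?_ (hD i)
  rw [show (fun b => Dd lam c z b i) = fun b => (lam i : ℂ) * (1 - (c : ℂ) - (c : ℂ) * z * b) - z
    from rfl]
  fun_prop

lemma G_sub_bound (hlam_pos : ∀ i, 0 < lam i) (hc0 : 0 < c) (hN : 0 < N)
    {b b' : ℂ}
    (hD : ∀ i, Dd lam c z b i ≠ 0) (hD' : ∀ i, Dd lam c z b' i ≠ 0) :
    ‖G N lam Ni c z b - G N lam Ni c z b'‖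
      ≤ c * ‖z‖ * Real.sqrt (Bq N lam Ni c z b * Bq N lam Ni c z b')
        * ‖b - b'‖ := by
  have hNpos : (0:ℝ) < N := by exact_mod_cast hN
  have hterm : ∀ i : Fin L, (Ni i : ℂ) / Dd lam c z b i - (Ni i : ℂ) / Dd lam c z b' i
      = (Ni i : ℂ) * (lam i : ℂ) * ((c:ℂ) * z) * (b - b')
        / (Dd lam c z b i * Dd lam c z b' i) := by
    intro i
    have hdd : Dd lam c z b' i - Dd lam c z b i = (lam i : ℂ) * ((c:ℂ) * z) * (b - b') := by
      simp only [Dd]; ring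
    rw [div_sub_div _ _ (hD i) (hD' i)]
    congr 1
    linear_combination (Ni i : ℂ) * hdd
  have hGdiff : G N lam Ni c z b - G N lam Ni c z b'
      = (1 / (N : ℂ)) * ∑ i, ((Ni i : ℂ) * (lam i : ℂ) * ((c:ℂ) * z) * (b - b')
          / (Dd lam c z b i * Dd lam c z b' i)) := by
    rw [G, G, ← mul_sub, ← Finset.sum_sub_distrib]
    congr 1
    exact Finset.sum_congr rfl fun i _ => hterm i
  set s : ℝ := ∑ i, ((Ni i : ℝ) * lam i) / (‖Dd lam c z b i‖
      * ‖Dd lam c z b' i‖) with hs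
  have hsnn : 0 ≤ s := by
    apply Finset.sum_nonneg fun i _ => ?_
    have := (hlam_pos i).le
    positivity
  have hCS : s ≤ (N:ℝ) * Real.sqrt (Bq N lam Ni c z b * Bq N lam Ni c z b') := by
    set f : Fin L → ℝ := fun i => Real.sqrt ((Ni i : ℝ) * lam i) / ‖Dd lam c z b i‖
    set g : Fin L → ℝ := fun i => Real.sqrt ((Ni i : ℝ) * lam i) / ‖Dd lam c z b' i‖
    have hfg : ∀ i : Fin L, f i * g i = ((Ni i : ℝ) * lam i) / (‖Dd lam c z b i‖
        * ‖Dd lam c z b' i‖) := by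
      intro i
      have hnn : (0:ℝ) ≤ (Ni i : ℝ) * lam i := by have := (hlam_pos i).le; positivity
      simp only [f, g, div_mul_div_comm, Real.mul_self_sqrt hnn]
    have hf2 : ∀ i : Fin L, f i ^ 2 = (Ni i : ℝ) * lam i / Complex.normSq (Dd lam c z b i) := by
      intro i
      have hnn : (0:ℝ) ≤ (Ni i : ℝ) * lam i := by have := (hlam_pos i).le; positivity
      simp only [f, div_pow, Real.sq_sqrt hnn, Complex.sq_norm]
    have hg2 : ∀ i : Fin L, g i ^ 2 = (Ni i : ℝ) * lam i / Complex.normSq (Dd lam c z b' i) := by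
      intro i
      have hnn : (0:ℝ) ≤ (Ni i : ℝ) * lam i := by have := (hlam_pos i).le; positivity
      simp only [g, div_pow, Real.sq_sqrt hnn, Complex.sq_norm]
    have key := Finset.sum_mul_sq_le_sq_mul_sq Finset.univ f g
    rw [show (∑ i, f i * g i) = s by rw [hs]; exact Finset.sum_congr rfl fun i _ => hfg i] at key
    have h1 : (∑ i, f i ^ 2) = (N:ℝ) * Bq N lam Ni c z b := by
      rw [Bq]; rw [Finset.sum_congr rfl fun i _ => hf2 i]; field_simp
    have h2 : (∑ i, g i ^ 2) = (N:ℝ) * Bq N lam Ni c z b' := by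
      rw [Bq]; rw [Finset.sum_congr rfl fun i _ => hg2 i]; field_simp
    rw [h1, h2] at key
    have h4 := Real.sqrt_le_sqrt key
    rw [Real.sqrt_sq hsnn] at h4
    refine h4.trans (le_of_eq ?_)
    rw [show (N:ℝ) * Bq N lam Ni c z b * ((N:ℝ) * Bq N lam Ni c z b')
        = (N:ℝ)^2 * (Bq N lam Ni c z b * Bq N lam Ni c z b') by ring,
      Real.sqrt_mul (sq_nonneg _), Real.sqrt_sq hNpos.le]
  rw [hGdiff, norm_mul]
  have habs1 : ‖1 / (N:ℂ)‖ = 1 / (N:ℝ) := by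
    rw [norm_div, norm_one, Complex.norm_natCast]
  rw [habs1]
  have h3 : ‖∑ i, ((Ni i : ℂ) * (lam i : ℂ) * ((c:ℂ) * z) * (b - b')
      / (Dd lam c z b i * Dd lam c z b' i))‖
      ≤ s * (c * ‖z‖ * ‖b - b'‖) := by
    refine (norm_sum_le _ _).trans ?_
    rw [Finset.sum_mul]
    refine Finset.sum_le_sum fun i _ => ?_
    rw [norm_div, norm_mul, norm_mul, norm_mul, norm_mul, norm_mul, Complex.norm_natCast,
      Complex.norm_real, Complex.norm_real, Real.norm_eq_abs, Real.norm_eq_abs]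
    rw [abs_of_pos (hlam_pos i), abs_of_pos hc0]
    apply le_of_eq
    field_simp
  calc 1/(N:ℝ) * ‖∑ i, ((Ni i : ℂ) * (lam i : ℂ) * ((c:ℂ) * z) * (b - b')
        / (Dd lam c z b i * Dd lam c z b' i))‖
      ≤ 1/(N:ℝ) * (s * (c * ‖z‖ * ‖b - b'‖)) :=
        mul_le_mul_of_nonneg_left h3 (by positivity)
    _ ≤ 1/(N:ℝ) * (((N:ℝ) * Real.sqrt (Bq N lam Ni c z b * Bq N lam Ni c z b'))
          * (c * ‖z‖ * ‖b - b'‖)) := by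
        have hcz : 0 ≤ c * ‖z‖ * ‖b - b'‖ := by positivity
        exact mul_le_mul_of_nonneg_left (mul_le_mul_of_nonneg_right hCS hcz) (by positivity)
    _ = c * ‖z‖ * Real.sqrt (Bq N lam Ni c z b * Bq N lam Ni c z b')
          * ‖b - b'‖ := by field_simp

lemma key_ineq (hc0 : 0 < c) (hc1 : c < 1) (hz : 0 < z.im)
    {b : ℂ} (hbb : 0 < b.im) (hy : 0 < (z * b).im) (hbv : b.im * z.im ≤ 1)
    (hB : 0 < Bq N lam Ni c z b) (hQ : 0 < Qq N lam Ni c z b) :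
    c ^ 2 * Complex.normSq z * Bq N lam Ni c z b ^ 2 * (1 + eps c z)
        * (b.im * (z * b).im)
      ≤ (G N lam Ni c z b).im * (z * G N lam Ni c z b).im := by
  have hnsq := normSq_z_pos z hz
  rw [G_im, zG_im]
  set B := Bq N lam Ni c z b
  set Q := Qq N lam Ni c z b
  have heps : eps c z * (c * Complex.normSq z) = (1 - c) * z.im ^ 2 := by
    rw [eps]; field_simp
  have heps2 : c ^ 2 * Complex.normSq z * B ^ 2 * b.im * (z*b).im * eps c z
      = c * (1-c) * z.im ^ 2 * B ^ 2 * b.im * (z*b).im := by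
    linear_combination (c * B^2 * b.im * (z*b).im) * heps
  have ht1 : 0 ≤ c * (1-c) * z.im * B^2 * (z*b).im * (1 - z.im * b.im) := by
    have h1 : 0 ≤ 1 - z.im * b.im := by nlinarith
    have h2 : (0:ℝ) ≤ 1 - c := by linarith
    exact mul_nonneg (mul_nonneg (mul_nonneg (mul_nonneg (mul_nonneg hc0.le h2) hz.le)
      (sq_nonneg B)) hy.le) h1
  have ht2 : 0 ≤ z.im * Q * (((1 - c) * z.im + c * Complex.normSq z * b.im) * B) := by
    have h2 : (0:ℝ) ≤ 1 - c := by linarith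
    have h3 : 0 ≤ (1 - c) * z.im + c * Complex.normSq z * b.im := by
      have h4 := mul_nonneg h2 hz.le
      have h5 := mul_nonneg (mul_nonneg hc0.le hnsq.le) hbb.le
      linarith
    exact mul_nonneg (mul_nonneg hz.le hQ.le) (mul_nonneg h3 hB.le)
  nlinarith [ht1, ht2, heps2]

end MPaux

set_option maxHeartbeats 2000000 in
open MPaux in
/-- Theorem 1 (eq. (9)) of the paper: for every `z` in the open upper half-plane there is
exactly one `b` with positive imaginary part satisfying the Marcenko–Pastur-type equation
`b = (1/N) * Σ_{i=1}^{L} N_i / (λ_i (1 − c − c z b) − z)`. -/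
theorem mp_equation_unique_solution
    (L N : ℕ) (hL : 0 < L) (hN : 0 < N)
    (lam : Fin L → ℝ) (hlam_pos : ∀ i, 0 < lam i) (hlam_mono : StrictMono lam)
    (Ni : Fin L → ℕ) (hNi : ∀ i, 0 < Ni i) (hsum : ∑ i, Ni i = N)
    (c : ℝ) (hc0 : 0 < c) (hc1 : c < 1)
    (z : ℂ) (hz : 0 < z.im) :
    ∃! b : ℂ, 0 < b.im ∧
      b = (1 / (N : ℂ)) *
        ∑ i, (Ni i : ℂ) / ((lam i : ℂ) * (1 - (c : ℂ) - (c : ℂ) * z * b) - z) := by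
  classical
  have hvpos : 0 < z.im := hz
  set v : ℝ := z.im with hvdef
  set F : ℂ → ℂ := MPaux.G N lam Ni c z with hFdef
  have hGd : ∀ b : ℂ, MPaux.G N lam Ni c z b
      = (1 / (N : ℂ)) * ∑ i, (Ni i : ℂ) / ((lam i : ℂ) * (1 - (c:ℂ) - (c:ℂ) * z * b) - z) :=
    fun b => rfl
  set ε : ℝ := MPaux.eps c z with hεdef
  have hε : 0 < ε := MPaux.eps_pos c z hc0 hc1 hz
  have hnsq : 0 < Complex.normSq z := MPaux.normSq_z_pos z hz
  -- Any b with positive imaginary part has non-vanishing denominators.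
  have hDne : ∀ b : ℂ, 0 < b.im → ∀ i, MPaux.Dd lam c z b i ≠ 0 := by
    intro b hb i h
    have := MPaux.im_neg_of_Dd_zero lam c z hlam_pos hc0 hc1 hz h
    linarith
  -- for any solution of the fixed point equation with Im b > 0:
  have hsol : ∀ b : ℂ, 0 < b.im → b = F b →
      0 < (z * b).im ∧ c ^ 2 * Complex.normSq z * Bq N lam Ni c z b ^ 2 * (1 + ε) ≤ 1 := by
    intro b hb heq
    have hD := hDne b hb
    have hB := MPaux.Bq_pos N lam Ni c z hlam_pos hL hN hNi hD
    have hQ := MPaux.Qq_pos N lam Ni c z hL hN hNi hD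
    have hy : 0 < (z * b).im := by
      rw [show z * b = z * F b from by rw [← heq]]
      rw [hFdef, MPaux.zG_im]
      have h1 : 0 < (1 - c) * v + c * Complex.normSq z * b.im := by
        have h2 : 0 < (1 - c) * v := mul_pos (by linarith) hvpos
        have h3 : 0 < c * Complex.normSq z * b.im := by positivity
        linarith
      exact mul_pos h1 hB
    have habs : ‖b‖ ≤ 1 / v := by
      rw [heq]
      exact MPaux.abs_G_le N lam Ni c z hlam_pos hc0 hz hN hsum hy.le
    have hbv : b.im * v ≤ 1 := by
      have h1 : b.im ≤ ‖b‖ := by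
        have := Complex.abs_im_le_norm b
        exact (le_abs_self b.im).trans this
      have h2 : b.im ≤ 1 / v := h1.trans habs
      calc b.im * v ≤ (1 / v) * v := mul_le_mul_of_nonneg_right h2 hvpos.le
        _ = 1 := by field_simp
    have hkey := MPaux.key_ineq N lam Ni c z hc0 hc1 hz hb hy hbv hB hQ
    rw [← hεdef, ← hFdef, ← heq] at hkey
    refine ⟨hy, ?_⟩
    have hry : 0 < b.im * (z * b).im := mul_pos hb hy
    by_contra hcon
    push_neg at hcon
    have h9 : b.im * (z * b).im
        < c ^ 2 * normSq z * Bq N lam Ni c z b ^ 2 * (1 + ε) * (b.im * (z * b).im) :=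
      lt_mul_left hry hcon
    linarith
  -- uniqueness
  have huniq : ∀ b1 b2 : ℂ, (0 < b1.im ∧ b1 = F b1) → (0 < b2.im ∧ b2 = F b2) → b1 = b2 := by
    rintro b1 b2 ⟨h1, e1⟩ ⟨h2, e2⟩
    obtain ⟨hy1, hk1⟩ := hsol b1 h1 e1
    obtain ⟨hy2, hk2⟩ := hsol b2 h2 e2
    have hD1 := hDne b1 h1
    have hD2 := hDne b2 h2
    set B1 := Bq N lam Ni c z b1
    set B2 := Bq N lam Ni c z b2
    have hB1 := MPaux.Bq_pos N lam Ni c z hlam_pos hL hN hNi hD1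
    have hB2 := MPaux.Bq_pos N lam Ni c z hlam_pos hL hN hNi hD2
    have hsub : ‖b1 - b2‖
        ≤ c * ‖z‖ * Real.sqrt (B1 * B2) * ‖b1 - b2‖ := by
      nth_rewrite 1 [e1, e2]
      exact MPaux.G_sub_bound N lam Ni c z hlam_pos hc0 hN hD1 hD2
    set fac : ℝ := c * ‖z‖ * Real.sqrt (B1 * B2) with hfacdef
    have hfac0 : 0 ≤ fac := by positivity
    have hfacsq : fac ^ 2 * (1 + ε) ≤ 1 := by
      have h3 : fac ^ 2 = c ^ 2 * Complex.normSq z * (B1 * B2) := by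
        rw [hfacdef, mul_pow, mul_pow, Real.sq_sqrt (by positivity), Complex.sq_norm]
        try ring
      rw [h3]
      have h4 : 0 ≤ c^2 * Complex.normSq z * (1 + ε) := by positivity
      nlinarith [hk1, hk2, mul_nonneg h4 (sq_nonneg (B1 - B2))]
    have hfaclt : fac < 1 := by
      by_contra hcon
      push_neg at hcon
      have h6 : 1 ≤ fac ^ 2 := by nlinarith [hcon]
      have h7 : 1 * (1 + ε) ≤ fac ^ 2 * (1 + ε) := mul_le_mul_of_nonneg_right h6 (by linarith)
      linarith
    have habs0 : ‖b1 - b2‖ = 0 := by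
      have hd0 := norm_nonneg (b1 - b2)
      have hd1 : ‖b1 - b2‖ ≤ 0 := by nlinarith [hsub, hfaclt]
      exact le_antisymm hd1 hd0
    exact sub_eq_zero.mp (norm_eq_zero.mp habs0)
  -- EXISTENCE
  have hzabs : 0 < ‖z‖ := norm_pos_iff.mpr (MPaux.z_ne_zero z hz)
  set iMax : Fin L := ⟨L - 1, by omega⟩ with hiMax
  have hLam : ∀ i : Fin L, lam i ≤ lam iMax := by
    intro i
    refine hlam_mono.monotone ?_
    rw [Fin.le_def]
    have := i.isLt
    simp only [hiMax]
    omega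
  set CD : ℝ := lam iMax * (1 + c + c * ‖z‖ / v) + ‖z‖ with hCDdef
  have hCD : 0 < CD := by
    have := hlam_pos iMax
    positivity
  set R : ℝ := (1 / v) * (‖z‖ / v) with hRdef
  have hR : 0 < R := by positivity
  -- the step lemma
  have hstep : ∀ b : ℂ, 0 ≤ b.im → 0 ≤ (z * b).im → ‖b‖ ≤ 1 / v →
      0 < (F b).im ∧ 0 < (z * F b).im ∧ ‖F b‖ ≤ 1 / v
        ∧ v / CD ^ 2 ≤ (F b).im := by
    intro b hb hzb habs
    have hD : ∀ i, MPaux.Dd lam c z b i ≠ 0 :=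
      MPaux.Dd_ne_zero lam c z hlam_pos hc0 hz hzb
    have hB := MPaux.Bq_pos N lam Ni c z hlam_pos hL hN hNi hD
    have hQ := MPaux.Qq_pos N lam Ni c z hL hN hNi hD
    have hDle : ∀ i, ‖MPaux.Dd lam c z b i‖ ≤ CD := by
      intro i
      rw [hCDdef]
      exact MPaux.abs_Dd_le lam c z hc0 hz hLam hlam_pos habs i
    have hQlow : 1 / CD ^ 2 ≤ MPaux.Qq N lam Ni c z b :=
      MPaux.Qq_lower N lam Ni c z hN hsum hCD hD hDle
    have him : (F b).im = c * (z * b).im * MPaux.Bq N lam Ni c z b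
        + v * MPaux.Qq N lam Ni c z b := by rw [hFdef, MPaux.G_im]
    have hzim : (z * F b).im = ((1 - c) * v + c * Complex.normSq z * b.im)
        * MPaux.Bq N lam Ni c z b := by rw [hFdef, MPaux.zG_im]
    have h1 : 0 ≤ c * (z * b).im * MPaux.Bq N lam Ni c z b := by positivity
    refine ⟨?_, ?_, ?_, ?_⟩
    · rw [him]
      nlinarith [mul_pos hvpos hQ]
    · rw [hzim]
      have h2 : 0 < (1 - c) * v + c * Complex.normSq z * b.im := by
        have h3 : 0 < (1 - c) * v := mul_pos (by linarith) hvpos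
        have h4 : 0 ≤ c * Complex.normSq z * b.im := by positivity
        linarith
      exact mul_pos h2 hB
    · rw [hFdef]
      exact MPaux.abs_G_le N lam Ni c z hlam_pos hc0 hz hN hsum hzb
    · rw [him]
      have h5 : v / CD ^ 2 ≤ v * MPaux.Qq N lam Ni c z b := by
        rw [div_eq_mul_one_div]
        exact mul_le_mul_of_nonneg_left hQlow hvpos.le
      linarith
  -- the orbit
  set t : ℕ → ℂ := fun n => F^[n] 0 with htdef
  have ht_succ : ∀ n, t (n + 1) = F (t n) := fun n => Function.iterate_succ_apply' F n 0
  have hgood : ∀ n, 0 ≤ (t n).im ∧ 0 ≤ (z * t n).im ∧ ‖t n‖ ≤ 1 / v := by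
    intro n
    induction n with
    | zero =>
        refine ⟨by simp [htdef], by simp [htdef], ?_⟩
        simp only [htdef, Function.iterate_zero, id_eq, norm_zero]
        positivity
    | succ n ih =>
        obtain ⟨ha, hb', hcle⟩ := ih
        obtain ⟨p1, p2, p3, _⟩ := hstep (t n) ha hb' hcle
        rw [ht_succ]
        exact ⟨p1.le, p2.le, p3⟩
  set seq : ℕ → ℂ := fun n => t (n + 1) with hseqdef
  have hseq_succ : ∀ n, seq (n + 1) = F (seq n) := fun n => ht_succ (n + 1)
  have hseqP : ∀ n, 0 < (seq n).im ∧ 0 < (z * seq n).im ∧ ‖seq n‖ ≤ 1 / v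
      ∧ v / CD ^ 2 ≤ (seq n).im := by
    intro n
    obtain ⟨ha, hb', hcle⟩ := hgood n
    have := hstep (t n) ha hb' hcle
    rw [← ht_succ] at this
    exact this
  have hDseq : ∀ n, ∀ i, MPaux.Dd lam c z (seq n) i ≠ 0 := fun n =>
    MPaux.Dd_ne_zero lam c z hlam_pos hc0 hz (hseqP n).2.1.le
  have hBseq : ∀ n, 0 < MPaux.Bq N lam Ni c z (seq n) := fun n =>
    MPaux.Bq_pos N lam Ni c z hlam_pos hL hN hNi (hDseq n)
  have hQseq : ∀ n, 0 < MPaux.Qq N lam Ni c z (seq n) := fun n =>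
    MPaux.Qq_pos N lam Ni c z hL hN hNi (hDseq n)
  set r : ℕ → ℝ := fun n => (seq n).im * (z * seq n).im with hrdef
  have hrpos : ∀ n, 0 < r n := fun n => mul_pos (hseqP n).1 (hseqP n).2.1
  have hrR : ∀ n, r n ≤ R := by
    intro n
    have h1 : (seq n).im ≤ 1 / v :=
      ((le_abs_self _).trans (Complex.abs_im_le_norm _)).trans (hseqP n).2.2.1
    have h2 : (z * seq n).im ≤ ‖z‖ / v := by
      have h3 : (z * seq n).im ≤ ‖z * seq n‖ :=
        (le_abs_self _).trans (Complex.abs_im_le_norm _)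
      rw [norm_mul] at h3
      refine h3.trans ?_
      rw [div_eq_mul_one_div]
      exact mul_le_mul_of_nonneg_left (hseqP n).2.2.1 hzabs.le
    rw [hrdef, hRdef]
    exact mul_le_mul h1 h2 (hseqP n).2.1.le (by positivity)
  have hbvseq : ∀ n, (seq n).im * v ≤ 1 := by
    intro n
    have h1 : (seq n).im ≤ 1 / v :=
      ((le_abs_self _).trans (Complex.abs_im_le_norm _)).trans (hseqP n).2.2.1
    calc (seq n).im * v ≤ (1 / v) * v := mul_le_mul_of_nonneg_right h1 hvpos.le
      _ = 1 := by field_simp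
  set d : ℕ → ℝ := fun n => ‖seq (n + 1) - seq n‖ with hddef
  have hd0 : ∀ n, 0 ≤ d n := fun n => norm_nonneg _
  have hdstep : ∀ n, d (n + 1)
      ≤ (c * ‖z‖ * Real.sqrt (MPaux.Bq N lam Ni c z (seq (n+1))
          * MPaux.Bq N lam Ni c z (seq n))) * d n := by
    intro n
    have h1 : seq (n + 2) - seq (n + 1) = F (seq (n+1)) - F (seq n) := by
      rw [hseq_succ (n+1), hseq_succ n]
    show ‖seq (n+2) - seq (n+1)‖ ≤ _
    rw [h1, hFdef]
    exact MPaux.G_sub_bound N lam Ni c z hlam_pos hc0 hN (hDseq (n+1)) (hDseq n)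
  have hkeyn : ∀ n, c ^ 2 * Complex.normSq z * MPaux.Bq N lam Ni c z (seq n) ^ 2 * (1 + ε)
      * r n ≤ r (n + 1) := by
    intro n
    have hk := MPaux.key_ineq N lam Ni c z hc0 hc1 hz (hseqP n).1 (hseqP n).2.1
      (hbvseq n) (hBseq n) (hQseq n)
    rw [← hεdef, ← hFdef, ← hseq_succ n] at hk
    exact hk
  -- the decay of 4th powers
  have hq4 : ∀ n, d (n + 1) ^ 4 * ((1 + ε) ^ 2 * (r n * r (n + 1)))
      ≤ d n ^ 4 * (r (n + 1) * r (n + 2)) := by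
    intro n
    have hd4 : d (n + 1) ^ 4
        ≤ (c ^ 2 * Complex.normSq z * MPaux.Bq N lam Ni c z (seq n) ^ 2)
          * (c ^ 2 * Complex.normSq z * MPaux.Bq N lam Ni c z (seq (n+1)) ^ 2)
          * d n ^ 4 := by
      have h1 := pow_le_pow_left₀ (hd0 (n+1)) (hdstep n) 4
      refine h1.trans (le_of_eq ?_)
      have hBnn : (0:ℝ) ≤ MPaux.Bq N lam Ni c z (seq (n+1)) * MPaux.Bq N lam Ni c z (seq n) :=
        mul_nonneg (hBseq (n+1)).le (hBseq n).le
      rw [mul_pow, mul_pow, mul_pow]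
      rw [show (4:ℕ) = 2 * 2 from rfl, pow_mul, pow_mul, pow_mul, Real.sq_sqrt hBnn,
        Complex.sq_norm]
      ring
    calc d (n + 1) ^ 4 * ((1 + ε) ^ 2 * (r n * r (n + 1)))
        ≤ ((c ^ 2 * Complex.normSq z * MPaux.Bq N lam Ni c z (seq n) ^ 2)
            * (c ^ 2 * Complex.normSq z * MPaux.Bq N lam Ni c z (seq (n+1)) ^ 2)
            * d n ^ 4) * ((1 + ε) ^ 2 * (r n * r (n + 1))) := by
          refine mul_le_mul_of_nonneg_right hd4 ?_
          have := (hrpos n).le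
          have := (hrpos (n+1)).le
          positivity
      _ = d n ^ 4 * ((c ^ 2 * Complex.normSq z * MPaux.Bq N lam Ni c z (seq n) ^ 2 * (1 + ε)
            * r n) * (c ^ 2 * Complex.normSq z * MPaux.Bq N lam Ni c z (seq (n+1)) ^ 2 * (1 + ε)
            * r (n + 1))) := by ring
      _ ≤ d n ^ 4 * (r (n + 1) * r (n + 2)) := by
          refine mul_le_mul_of_nonneg_left ?_ (by positivity)
          refine mul_le_mul (hkeyn n) (hkeyn (n+1)) ?_ (hrpos (n+1)).le
          have h2 := (hBseq (n+1)).le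
          have h3 := (hrpos (n+1)).le
          positivity
  have hq' : ∀ n, d n ^ 4 * ((1 + ε) ^ 2) ^ n * (r 0 * r 1) ≤ d 0 ^ 4 * (r n * r (n + 1)) := by
    intro n
    induction n with
    | zero => simp
    | succ n ih =>
        refine le_of_mul_le_mul_right ?_ (mul_pos (hrpos n) (hrpos (n+1)))
        calc d (n+1) ^ 4 * ((1 + ε) ^ 2) ^ (n+1) * (r 0 * r 1) * (r n * r (n+1))
            = (d (n+1) ^ 4 * ((1 + ε) ^ 2 * (r n * r (n+1)))) * (((1 + ε) ^ 2) ^ n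
              * (r 0 * r 1)) := by ring
          _ ≤ (d n ^ 4 * (r (n+1) * r (n+2))) * (((1 + ε) ^ 2) ^ n * (r 0 * r 1)) := by
              refine mul_le_mul_of_nonneg_right (hq4 n) ?_
              have := (hrpos 0).le
              have := (hrpos 1).le
              positivity
          _ = (d n ^ 4 * ((1 + ε) ^ 2) ^ n * (r 0 * r 1)) * (r (n+1) * r (n+2)) := by ring
          _ ≤ (d 0 ^ 4 * (r n * r (n+1))) * (r (n+1) * r (n+2)) := by
              refine mul_le_mul_of_nonneg_right ih ?_
              have := (hrpos (n+1)).le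
              have := (hrpos (n+2)).le
              positivity
          _ = d 0 ^ 4 * (r (n+1) * r (n+2)) * (r n * r (n+1)) := by ring
  have hd4R : ∀ n, d n ^ 4 * ((1 + ε) ^ 2) ^ n * (r 0 * r 1) ≤ d 0 ^ 4 * R ^ 2 := by
    intro n
    refine (hq' n).trans ?_
    have h1 : r n * r (n + 1) ≤ R ^ 2 := by
      have := hrR n
      have := hrR (n+1)
      have := (hrpos n).le
      have := (hrpos (n+1)).le
      nlinarith
    exact mul_le_mul_of_nonneg_left h1 (by positivity)
  -- geometric bound
  set C4 : ℝ := d 0 ^ 4 * R ^ 2 / (r 0 * r 1) with hC4def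
  have hC40 : 0 ≤ C4 := by
    have := (hrpos 0).le
    have := (hrpos 1).le
    have := hd0 0
    positivity
  set k : ℝ := 1 / Real.sqrt (1 + ε) with hkdef
  have hsq1 : 1 < Real.sqrt (1 + ε) := by
    rw [show (1:ℝ) = Real.sqrt 1 from Real.sqrt_one.symm]
    exact Real.sqrt_lt_sqrt (by norm_num) (by rw [Real.sqrt_one]; linarith)
  have hk0 : 0 ≤ k := by positivity
  have hk1 : k < 1 := by
    rw [hkdef, div_lt_one (by linarith)]
    linarith
  have hk4 : k ^ 4 = 1 / (1 + ε) ^ 2 := by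
    rw [hkdef, div_pow, one_pow, show (4:ℕ) = 2 * 2 from rfl, pow_mul,
      Real.sq_sqrt (by linarith : (0:ℝ) ≤ 1 + ε)]
  set C : ℝ := Real.sqrt (Real.sqrt C4) with hCdef
  have hC0 : 0 ≤ C := Real.sqrt_nonneg _
  have hC4eq : C ^ 4 = C4 := by
    rw [hCdef, show (4:ℕ) = 2 * 2 from rfl, pow_mul, Real.sq_sqrt (Real.sqrt_nonneg _),
      Real.sq_sqrt hC40]
  have hdgeo : ∀ n, d n ≤ C * k ^ n := by
    intro n
    have hr01 : 0 < r 0 * r 1 := mul_pos (hrpos 0) (hrpos 1)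
    have h1 : d n ^ 4 * ((1 + ε) ^ 2) ^ n ≤ C4 := by
      rw [hC4def, le_div_iff₀ hr01]
      exact hd4R n
    have e1 : ((1 + ε) ^ 2) ^ n * ((1 / (1 + ε) ^ 2)) ^ n = 1 := by
      rw [← mul_pow, show (1 + ε) ^ 2 * (1 / (1 + ε) ^ 2) = 1 from by
        field_simp, one_pow]
    have h2 : d n ^ 4 ≤ C4 * (1 / (1 + ε) ^ 2) ^ n := by
      calc d n ^ 4 = d n ^ 4 * ((1 + ε) ^ 2) ^ n * (1 / (1 + ε) ^ 2) ^ n := by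
            rw [mul_assoc, e1, mul_one]
        _ ≤ C4 * (1 / (1 + ε) ^ 2) ^ n :=
            mul_le_mul_of_nonneg_right h1 (by positivity)
    have h3 : (C * k ^ n) ^ 4 = C4 * (1 / (1 + ε) ^ 2) ^ n := by
      rw [mul_pow, hC4eq, ← pow_mul, mul_comm n 4, pow_mul, hk4]
    refine (pow_le_pow_iff_left₀ (hd0 n) (by positivity) (by norm_num : (4:ℕ) ≠ 0)).1 ?_
    rw [h3]
    exact h2
  -- Cauchy sequence and limit
  have hcauchy : CauchySeq seq := by
    refine cauchySeq_of_le_geometric k C hk1 fun n => ?_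
    rw [dist_comm, Complex.dist_eq]
    exact hdgeo n
  obtain ⟨bs, hbs⟩ := cauchySeq_tendsto_of_complete hcauchy
  have htendim : Filter.Tendsto (fun n => (seq n).im) Filter.atTop (nhds bs.im) :=
    (Complex.continuous_im.tendsto bs).comp hbs
  have hbsim_lb : v / CD ^ 2 ≤ bs.im :=
    ge_of_tendsto' htendim fun n => (hseqP n).2.2.2
  have hbsim : 0 < bs.im := lt_of_lt_of_le (by positivity) hbsim_lb
  have htendzim : Filter.Tendsto (fun n => (z * seq n).im) Filter.atTop (nhds ((z * bs).im)) := by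
    have hc : Continuous fun w : ℂ => (z * w).im := Complex.continuous_im.comp
      (continuous_const.mul continuous_id)
    exact (hc.tendsto bs).comp hbs
  have hzbs : 0 ≤ (z * bs).im := ge_of_tendsto' htendzim fun n => (hseqP n).2.1.le
  have hDbs : ∀ i, MPaux.Dd lam c z bs i ≠ 0 :=
    MPaux.Dd_ne_zero lam c z hlam_pos hc0 hz hzbs
  have hfix : F bs = bs := by
    have hcont : ContinuousAt F bs := by
      rw [hFdef]
      exact MPaux.continuousAt_G N lam Ni c z hDbs
    have h2 : Filter.Tendsto (fun n => F (seq n)) Filter.atTop (nhds (F bs)) :=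
      hcont.tendsto.comp hbs
    have h3 : Filter.Tendsto (fun n => seq (n + 1)) Filter.atTop (nhds bs) :=
      hbs.comp (Filter.tendsto_add_atTop_nat 1)
    have h4 : (fun n => seq (n + 1)) = fun n => F (seq n) := funext hseq_succ
    rw [h4] at h3
    exact tendsto_nhds_unique h2 h3
  -- conclusion
  refine ⟨bs, ⟨hbsim, ?_⟩, ?_⟩
  · rw [← hGd bs]
    exact hfix.symm
  · rintro b' ⟨hb'pos, hb'eq⟩
    refine huniq b' bs ⟨hb'pos, ?_⟩ ⟨hbsim, hfix.symm⟩
    rw [← hGd b'] at hb'eq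
    exact hb'eq
end

section
/- Let Y be an N×K complex matrix such that Y Yᴴ is invertible, set M̂ = (Y Yᴴ)⁻¹ and c_K = N/K. Then for every z ∈ ℂ with Im z ≠ 0, the matrices Yᴴ Y − (1/z) I_K and M̂ − z I_N are invertible and (1/K) tr((Yᴴ Y − (1/z) I_K)⁻¹) = −z (1 + c_K z · (1/N) tr((M̂ − z I_N)⁻¹)). -/
open Matrix

lemma herm_shift_isUnit {n : Type*} [Fintype n] [DecidableEq n]
    {B : Matrix n n ℂ} (hB : B.IsHermitian) {w : ℂ} (hw : w.im ≠ 0) :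
    IsUnit (B - w • (1 : Matrix n n ℂ)) := by
  have hU : IsUnit ((hB.eigenvectorUnitary : Matrix n n ℂ)) :=
    (Unitary.toUnits hB.eigenvectorUnitary).isUnit
  have hU' : IsUnit (star (hB.eigenvectorUnitary : Matrix n n ℂ)) := hU.star
  have key : B - w • (1 : Matrix n n ℂ) =
      (hB.eigenvectorUnitary : Matrix n n ℂ) *
        (diagonal (fun i => (hB.eigenvalues i : ℂ) - w)) *
        (star (hB.eigenvectorUnitary : Matrix n n ℂ)) := by
    have h1 : (hB.eigenvectorUnitary : Matrix n n ℂ) *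
        (star (hB.eigenvectorUnitary : Matrix n n ℂ)) = 1 :=
      (Matrix.mem_unitaryGroup_iff).mp hB.eigenvectorUnitary.2
    calc B - w • (1 : Matrix n n ℂ)
        = (hB.eigenvectorUnitary : Matrix n n ℂ) * diagonal (RCLike.ofReal ∘ hB.eigenvalues)
            * (star (hB.eigenvectorUnitary : Matrix n n ℂ))
          - (hB.eigenvectorUnitary : Matrix n n ℂ) * (w • 1)
            * (star (hB.eigenvectorUnitary : Matrix n n ℂ)) := by
          rw [← Unitary.conjStarAlgAut_apply (S := ℂ), ← hB.spectral_theorem]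
          congr 1
          rw [Matrix.mul_smul, Matrix.mul_one, Matrix.smul_mul, h1]
      _ = _ := by
          rw [← Matrix.sub_mul, ← Matrix.mul_sub, smul_one_eq_diagonal, diagonal_sub]
          rfl
  rw [key]
  refine (hU.mul ?_).mul hU'
  rw [Matrix.isUnit_diagonal]
  have hne : ∀ i, (hB.eigenvalues i : ℂ) - w ≠ 0 := by
    intro i h
    exact hw (by simpa using (congrArg Complex.im h).symm)
  exact IsUnit.of_mul_eq_one (fun i => ((hB.eigenvalues i : ℂ) - w)⁻¹)
    (funext fun i => mul_inv_cancel₀ (hne i))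

/-- Equation (14) of the paper: with `M̂ = (Y Yᴴ)⁻¹` and `c_K = N/K`, for every non-real `z`
the matrices `Yᴴ Y − (1/z) I_K` and `M̂ − z I_N` are invertible and
`b_{\underline{R̂}}(1/z) = −z (1 + c_K z b_M̂(z))`. -/
theorem dual_stieltjes_at_inv_relation
    (N K : ℕ) (hN : 0 < N) (hK : 0 < K)
    (Y : Matrix (Fin N) (Fin K) ℂ) (hY : IsUnit (Y * Yᴴ))
    (M : Matrix (Fin N) (Fin N) ℂ) (hM : M = (Y * Yᴴ)⁻¹)
    (z : ℂ) (hz : z.im ≠ 0) :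
    IsUnit (Yᴴ * Y - (1 / z) • (1 : Matrix (Fin K) (Fin K) ℂ)) ∧
    IsUnit (M - z • (1 : Matrix (Fin N) (Fin N) ℂ)) ∧
    (1 / (K : ℂ)) * Matrix.trace ((Yᴴ * Y - (1 / z) • (1 : Matrix (Fin K) (Fin K) ℂ))⁻¹) =
      -z * (1 + ((N : ℂ) / (K : ℂ)) * z *
        ((1 / (N : ℂ)) * Matrix.trace ((M - z • (1 : Matrix (Fin N) (Fin N) ℂ))⁻¹))) := by
  have hzne : z ≠ 0 := fun h => hz (by simp [h])
  set ζ : ℂ := 1 / z with hζ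
  have hζim : ζ.im ≠ 0 := by
    rw [hζ, one_div, Complex.inv_im]
    simp only [ne_eq, div_eq_zero_iff, neg_eq_zero]
    push_neg
    exact ⟨hz, by simpa [Complex.normSq_eq_zero] using hzne⟩
  have hζne : ζ ≠ 0 := fun h => hζim (by simp [h])
  set A : Matrix (Fin N) (Fin N) ℂ := Y * Yᴴ with hA
  have hAh : A.IsHermitian := Matrix.isHermitian_mul_conjTranspose_self Y
  have hBh : (Yᴴ * Y).IsHermitian := Matrix.isHermitian_conjTranspose_mul_self Y
  have hBu : IsUnit (Yᴴ * Y - ζ • (1 : Matrix (Fin K) (Fin K) ℂ)) :=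
    herm_shift_isUnit hBh hζim
  have hAu : IsUnit (A - ζ • (1 : Matrix (Fin N) (Fin N) ℂ)) :=
    herm_shift_isUnit hAh hζim
  have hAdet : IsUnit A.det := A.isUnit_iff_isUnit_det.mp hY
  have hAE : IsUnit (A - ζ • 1).det := (A - ζ • 1).isUnit_iff_isUnit_det.mp hAu
  set E : Matrix (Fin N) (Fin N) ℂ := (A - ζ • 1)⁻¹ with hE
  have hE1 : (A - ζ • 1) * E = 1 := Matrix.mul_nonsing_inv _ hAE
  have hE2 : E * (A - ζ • 1) = 1 := Matrix.nonsing_inv_mul _ hAE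
  have hAE1 : A * E = 1 + ζ • E := by
    have := hE1
    rw [Matrix.sub_mul, Matrix.smul_mul, Matrix.one_mul, sub_eq_iff_eq_add] at this
    rw [this]
  have hEA1 : E * A = 1 + ζ • E := by
    have := hE2
    rw [Matrix.mul_sub, Matrix.mul_smul, Matrix.mul_one, sub_eq_iff_eq_add] at this
    rw [this]
  -- the matrix M - z•1 equals (-z) • (A⁻¹ * (A - ζ•1))
  have hMdec : M - z • (1 : Matrix (Fin N) (Fin N) ℂ) =
      (-z) • (A⁻¹ * (A - ζ • 1)) := by
    rw [Matrix.mul_sub, Matrix.nonsing_inv_mul _ hAdet, Matrix.mul_smul, Matrix.mul_one,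
      smul_sub, smul_smul, hM]
    rw [hζ]
    field_simp
    simp only [neg_smul, one_smul, sub_neg_eq_add]
    abel
  -- inverse of Yᴴ Y - ζ 1
  have key1 : (Yᴴ * Y - ζ • 1) * (Yᴴ * E * Y - 1) =
      ζ • (1 : Matrix (Fin K) (Fin K) ℂ) := by
    have hmid : Yᴴ * Y * (Yᴴ * E * Y) = ζ • (Yᴴ * E * Y) + Yᴴ * Y := by
      calc Yᴴ * Y * (Yᴴ * E * Y) = Yᴴ * (A * E) * Y := by
            simp only [hA, Matrix.mul_assoc]
        _ = Yᴴ * (1 + ζ • E) * Y := by rw [hAE1]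
        _ = ζ • (Yᴴ * E * Y) + Yᴴ * Y := by
            rw [Matrix.mul_add, Matrix.add_mul, Matrix.mul_one, Matrix.mul_smul,
              Matrix.smul_mul]
            abel
    rw [Matrix.sub_mul, Matrix.mul_sub, Matrix.mul_sub, Matrix.mul_one, Matrix.smul_mul,
      Matrix.one_mul, hmid]
    simp only [Matrix.mul_one, neg_one_smul]
    abel
  have hBinv : (Yᴴ * Y - ζ • 1)⁻¹ = ζ⁻¹ • (Yᴴ * E * Y - 1) := by
    apply Matrix.inv_eq_right_inv
    rw [Matrix.mul_smul, key1, smul_smul, inv_mul_cancel₀ hζne, one_smul]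
  -- inverse of M - z 1
  have hMu : IsUnit (M - z • (1 : Matrix (Fin N) (Fin N) ℂ)) := by
    rw [hMdec]
    have h1 : IsUnit ((-z) • (1 : Matrix (Fin N) (Fin N) ℂ)) := by
      rw [smul_one_eq_diagonal, Matrix.isUnit_diagonal]
      exact IsUnit.of_mul_eq_one (fun _ => (-z)⁻¹)
        (funext fun i => mul_inv_cancel₀ (neg_ne_zero.mpr hzne))
    have h2 : IsUnit A⁻¹ := Matrix.isUnit_nonsing_inv_iff.mpr hY
    have : (-z) • (A⁻¹ * (A - ζ • 1)) =
        ((-z) • (1 : Matrix (Fin N) (Fin N) ℂ)) * (A⁻¹ * (A - ζ • 1)) := by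
      rw [Matrix.smul_mul, Matrix.one_mul]
    rw [this]
    exact h1.mul (h2.mul hAu)
  have hMinv : (M - z • (1 : Matrix (Fin N) (Fin N) ℂ))⁻¹ = (-z)⁻¹ • (E * A) := by
    apply Matrix.inv_eq_right_inv
    rw [hMdec, Matrix.smul_mul, Matrix.mul_smul, smul_smul,
      mul_inv_cancel₀ (neg_ne_zero.mpr hzne), one_smul]
    calc A⁻¹ * (A - ζ • 1) * (E * A) = A⁻¹ * ((A - ζ • 1) * E) * A := by noncomm_ring
      _ = 1 := by rw [hE1, Matrix.mul_one, Matrix.nonsing_inv_mul _ hAdet]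
  refine ⟨hBu, hMu, ?_⟩
  -- traces
  set T : ℂ := Matrix.trace E with hT
  have htr1 : Matrix.trace ((Yᴴ * Y - ζ • 1)⁻¹) = ζ⁻¹ * ((N : ℂ) + ζ * T - K) := by
    rw [hBinv, Matrix.trace_smul, Matrix.trace_sub, Matrix.trace_one, smul_eq_mul]
    congr 1
    have : Matrix.trace (Yᴴ * E * Y) = Matrix.trace (E * A) := by
      rw [Matrix.mul_assoc, Matrix.trace_mul_comm, hA, Matrix.mul_assoc]
    rw [this, hEA1, Matrix.trace_add, Matrix.trace_one, Matrix.trace_smul, smul_eq_mul]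
    simp only [Fintype.card_fin]
    try ring
  have htr2 : Matrix.trace ((M - z • (1 : Matrix (Fin N) (Fin N) ℂ))⁻¹) =
      (-z)⁻¹ * ((N : ℂ) + ζ * T) := by
    rw [hMinv, Matrix.trace_smul, hEA1, Matrix.trace_add, Matrix.trace_one,
      Matrix.trace_smul, smul_eq_mul, smul_eq_mul, Fintype.card_fin]
  have hKne : (K : ℂ) ≠ 0 := Nat.cast_ne_zero.mpr hK.ne'
  have hNne : (N : ℂ) ≠ 0 := Nat.cast_ne_zero.mpr hN.ne'
  rw [htr1, htr2, hζ]
  field_simp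
  ring
end

section
/- Let N, K be positive integers, c_K = N/K, let ρ̂_1, …, ρ̂_N be pairwise distinct positive real numbers, fix k ∈ {1,…,N}, and define ĝ_k(z) = −z (1 − c_K + (c_K/N) Σ_{r=1}^N (ρ̂_r/(ρ̂_r − z))²) / (ρ̂_k − z). Then for every radius δ with 0 < δ < min_{i ≠ k} |ρ̂_i − ρ̂_k|, the positively oriented circle integral satisfies (1/(2πi)) ∮_{|z − ρ̂_k| = δ} ĝ_k(z) dz = ρ̂_k (1 − c_K + (c_K/N) Σ_{r ≠ k} (ρ̂_r/(ρ̂_r − ρ̂_k))²). -/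
open scoped Real

private theorem circleIntegral_add' {f g : ℂ → ℂ} {c : ℂ} {R : ℝ}
    (hf : CircleIntegrable f c R) (hg : CircleIntegrable g c R) :
    (∮ z in C(c, R), (f z + g z)) = (∮ z in C(c, R), f z) + ∮ z in C(c, R), g z := by
  simp only [circleIntegral, smul_add, intervalIntegral.integral_add hf.out hg.out]

private theorem circleIntegrable_smul' {f : ℂ → ℂ} {c : ℂ} {R : ℝ} (a : ℂ)
    (hf : CircleIntegrable f c R) : CircleIntegrable (fun z => a • f z) c R :=
  IntervalIntegrable.smul hf a

/-- Residue computation (48) in the proof of Theorem 4 of the paper: the function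
`ĝ_k(z) = −z (1 − c_K + (c_K/N) Σ_r (ρ̂_r/(ρ̂_r − z))²) / (ρ̂_k − z)` has a third-order pole at
`ρ̂_k`, and its circle integral around `ρ̂_k` is given by the stated residue. -/
theorem residue_third_order_pole
    (N K : ℕ) (hN : 0 < N) (hK : 0 < K)
    (ρ : Fin N → ℝ) (hρ : ∀ i, 0 < ρ i) (hinj : Function.Injective ρ)
    (k : Fin N)
    (δ : ℝ) (hδ0 : 0 < δ) (hδ : ∀ i, i ≠ k → δ < |ρ i - ρ k|) :
    (1 / (2 * (π : ℂ) * Complex.I)) *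
        (∮ z in C((ρ k : ℂ), δ),
          -z * (1 - (N : ℂ) / (K : ℂ) +
              ((N : ℂ) / (K : ℂ)) / (N : ℂ) * ∑ r, ((ρ r : ℂ) / ((ρ r : ℂ) - z)) ^ 2) /
            ((ρ k : ℂ) - z)) =
      (ρ k : ℂ) * (1 - (N : ℂ) / (K : ℂ) +
        ((N : ℂ) / (K : ℂ)) / (N : ℂ) *
          ∑ r ∈ Finset.univ.erase k, ((ρ r : ℂ) / ((ρ r : ℂ) - (ρ k : ℂ))) ^ 2) := by
  set c0 : ℂ := (ρ k : ℂ) with hc0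
  set cc : ℂ := (N : ℂ) / (K : ℂ) with hcc
  set φ : ℂ → ℂ := fun z =>
    z * (1 - cc + cc / (N : ℂ) *
      ∑ r ∈ Finset.univ.erase k, ((ρ r : ℂ) / ((ρ r : ℂ) - z)) ^ 2) with hφ
  have hNz : ((N : ℕ) : ℂ) ≠ 0 := Nat.cast_ne_zero.2 hN.ne'
  have hKz : ((K : ℕ) : ℂ) ≠ 0 := Nat.cast_ne_zero.2 hK.ne'
  -- points inside the closed ball avoid the other poles
  have hball : ∀ z ∈ Metric.closedBall c0 δ, ∀ r : Fin N, r ≠ k → (ρ r : ℂ) ≠ z := by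
    intro z hz r hr heq
    rw [Metric.mem_closedBall, ← heq] at hz
    have h1 : dist ((ρ r : ℂ)) c0 = |ρ r - ρ k| := by
      rw [hc0, Complex.dist_eq, ← Complex.ofReal_sub, Complex.norm_real, Real.norm_eq_abs]
    rw [h1] at hz
    exact absurd (hz.trans_lt (hδ r hr)) (lt_irrefl _)
  have hsph : ∀ z ∈ Metric.sphere c0 δ, ∀ r : Fin N, (ρ r : ℂ) ≠ z := by
    intro z hz r
    rcases eq_or_ne r k with rfl | hr
    · intro heq
      rw [Metric.mem_sphere, ← heq] at hz
      simp only [← hc0, dist_self] at hz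
      exact hδ0.ne hz
    · exact hball z (Metric.sphere_subset_closedBall hz) r hr
  -- pointwise decomposition on the sphere
  have heq : Set.EqOn
      (fun z => -z * (1 - cc + cc / (N : ℂ) * ∑ r, ((ρ r : ℂ) / ((ρ r : ℂ) - z)) ^ 2) / (c0 - z))
      (fun z => (z - c0)⁻¹ • φ z +
        ((cc / (N : ℂ) * c0 ^ 2) • (z - c0) ^ (-2 : ℤ) +
         (cc / (N : ℂ) * c0 ^ 3) • (z - c0) ^ (-3 : ℤ)))
      (Metric.sphere c0 δ) := by
    intro z hz
    have hzc : z ≠ c0 := fun h => hsph z hz k h.symm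
    have hu : z - c0 ≠ 0 := sub_ne_zero.2 hzc
    have hu' : c0 - z ≠ 0 := sub_ne_zero.2 (Ne.symm hzc)
    have hsum : (∑ r, ((ρ r : ℂ) / ((ρ r : ℂ) - z)) ^ 2)
        = (c0 / (c0 - z)) ^ 2 + ∑ r ∈ Finset.univ.erase k, ((ρ r : ℂ) / ((ρ r : ℂ) - z)) ^ 2 := by
      rw [← Finset.add_sum_erase _ _ (Finset.mem_univ k)]
    simp only [hsum, hφ, smul_eq_mul]
    rw [show (-2 : ℤ) = -(2 : ℕ) by norm_num, show (-3 : ℤ) = -(3 : ℕ) by norm_num,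
      zpow_neg, zpow_neg, zpow_natCast, zpow_natCast]
    obtain ⟨u, hune, rfl⟩ : ∃ u, u ≠ 0 ∧ z = c0 + u := ⟨z - c0, hu, by ring⟩
    rw [show c0 - (c0 + u) = -u from by ring, show c0 + u - c0 = u from by ring]
    generalize (∑ r ∈ Finset.univ.erase k, ((ρ r : ℂ) / ((ρ r : ℂ) - (c0 + u))) ^ 2) = S
    field_simp [hune, hNz, hKz]
    ring
  -- integrability of the pieces
  have hA : CircleIntegrable (fun z => (z - c0)⁻¹ • φ z) c0 δ := by
    apply ContinuousOn.circleIntegrable hδ0.le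
    refine ContinuousOn.fun_smul ?_ ?_
    · exact (continuousOn_id.sub continuousOn_const).inv₀ fun z hz =>
        sub_ne_zero.2 fun h => hsph z hz k (Eq.symm h)
    · refine continuousOn_id.mul (continuousOn_const.add (continuousOn_const.mul
        (continuousOn_finset_sum _ fun r hr => ?_)))
      exact (continuousOn_const.div (continuousOn_const.sub continuousOn_id)
        fun z hz => sub_ne_zero.2 (hsph z hz r)).pow 2
  have hc0nm : c0 ∉ Metric.sphere c0 |δ| := by
    simpa [abs_of_pos hδ0] using hδ0.ne
  have hB2 : CircleIntegrable (fun z => (z - c0) ^ (-2 : ℤ)) c0 δ :=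
    circleIntegrable_sub_zpow_iff.2 (Or.inr (Or.inr hc0nm))
  have hB3 : CircleIntegrable (fun z => (z - c0) ^ (-3 : ℤ)) c0 δ :=
    circleIntegrable_sub_zpow_iff.2 (Or.inr (Or.inr hc0nm))
  have hB2' : CircleIntegrable (fun z => (cc / (N : ℂ) * c0 ^ 2) • (z - c0) ^ (-2 : ℤ)) c0 δ :=
    circleIntegrable_smul' _ hB2
  have hB3' : CircleIntegrable (fun z => (cc / (N : ℂ) * c0 ^ 3) • (z - c0) ^ (-3 : ℤ)) c0 δ :=
    circleIntegrable_smul' _ hB3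
  -- compute the integral
  have hd : DifferentiableOn ℂ φ (Metric.closedBall c0 δ) := by
    refine (differentiableOn_id.mul ((differentiableOn_const _).add
      ((differentiableOn_const _).mul (DifferentiableOn.fun_sum fun r hr => ?_))))
    exact ((differentiableOn_const _).div
      ((differentiableOn_const _).sub differentiableOn_id)
      fun z hz => sub_ne_zero.2 (hball z hz r (Finset.mem_erase.1 hr).1)).pow 2
  have h1 : (∮ z in C(c0, δ), (z - c0)⁻¹ • φ z) = (2 * (π : ℂ) * Complex.I) • φ c0 :=
    hd.circleIntegral_sub_inv_smul (Metric.mem_ball_self hδ0)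
  have h2 : (∮ z in C(c0, δ), (cc / (N : ℂ) * c0 ^ 2) • (z - c0) ^ (-2 : ℤ)) = 0 := by
    rw [circleIntegral.integral_smul,
      circleIntegral.integral_sub_zpow_of_ne (by norm_num) c0 c0 δ, smul_zero]
  have h3 : (∮ z in C(c0, δ), (cc / (N : ℂ) * c0 ^ 3) • (z - c0) ^ (-3 : ℤ)) = 0 := by
    rw [circleIntegral.integral_smul,
      circleIntegral.integral_sub_zpow_of_ne (by norm_num) c0 c0 δ, smul_zero]
  have h23 : CircleIntegrable (fun z => (cc / (N : ℂ) * c0 ^ 2) • (z - c0) ^ (-2 : ℤ) +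
      (cc / (N : ℂ) * c0 ^ 3) • (z - c0) ^ (-3 : ℤ)) c0 δ := hB2'.add hB3'
  rw [circleIntegral.integral_congr hδ0.le heq,
    circleIntegral_add' hA h23, circleIntegral_add' hB2' hB3',
    h1, h2, h3, add_zero, add_zero, smul_eq_mul]
  have hπ : (2 * (π : ℂ) * Complex.I) ≠ 0 := by
    simp [Real.pi_ne_zero, Complex.I_ne_zero, Complex.ofReal_ne_zero]
  rw [one_div, inv_mul_cancel_left₀ hπ]
end

section
/- Let x₀ be a real number and 0 < r < r' be radii such that |ρ̂_k − x₀| < r for every k ∈ 𝒩_m and |ρ̂_i − x₀| > r' for every i ∉ 𝒩_m. Let C be the positively oriented circle of center x₀ and radius r, and C' the positively oriented circle of center x₀ and radius r'. Then (1/(2πi))² ∮_{C'} ( ∮_{C} ( −B(z₁) B(z₂) / (z₁ − z₂)² ) dz₁ ) dz₂ = (1/K²) [ Σ_{k ∈ 𝒩_m} Σ_{l ∉ 𝒩_m} ρ̂_k² ρ̂_l² / (ρ̂_k − ρ̂_l)² + (K − N) Σ_{k ∈ 𝒩_m} ρ̂_k² ]. -/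
open scoped Real

open Metric Complex Set Finset

open scoped Classical

namespace I2Aux

/-- Sum rule for circle integrals. -/
lemma cint_sum {ι : Type*} (s : Finset ι) {f : ι → ℂ → ℂ} {c : ℂ} {R : ℝ}
    (h : ∀ i ∈ s, CircleIntegrable (f i) c R) :
    (∮ z in C(c, R), ∑ i ∈ s, f i z) = ∑ i ∈ s, ∮ z in C(c, R), f i z := by
  simp only [circleIntegral, Finset.smul_sum]
  exact intervalIntegral.integral_finset_sum fun i hi => (h i hi).out

lemma cint_add {f g : ℂ → ℂ} {c : ℂ} {R : ℝ} (hf : CircleIntegrable f c R)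
    (hg : CircleIntegrable g c R) :
    (∮ z in C(c, R), (f z + g z)) = (∮ z in C(c, R), f z) + ∮ z in C(c, R), g z := by
  simp only [circleIntegral, smul_add]
  exact intervalIntegral.integral_add hf.out hg.out

lemma ciSum {ι : Type*} (s : Finset ι) {f : ι → ℂ → ℂ} {c : ℂ} {R : ℝ}
    (h : ∀ i ∈ s, CircleIntegrable (f i) c R) :
    CircleIntegrable (fun z => ∑ i ∈ s, f i z) c R := by
  classical
  induction s using Finset.induction with
  | empty => simpa using circleIntegrable_const (0 : ℂ) c R
  | @insert a s ha ih =>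
      have : (fun z => ∑ i ∈ insert a s, f i z)
          = fun z => f a z + ∑ i ∈ s, f i z := by
        funext z; rw [Finset.sum_insert ha]
      rw [this]
      exact (h a (Finset.mem_insert_self a s)).add
        (ih fun i hi => h i (Finset.mem_insert_of_mem hi))

lemma ne_on_sphere {c w z : ℂ} {R : ℝ} (hw : w ∉ sphere c R) (hz : z ∈ sphere c R) :
    z ≠ w := fun h => hw (h ▸ hz)

lemma not_sphere_of_cases {c u : ℂ} {R : ℝ}
    (h : u ∈ ball c R ∨ u ∉ closedBall c R) : u ∉ sphere c R := by
  rcases h with h | h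
  · exact fun hs => (ne_of_lt (mem_ball.1 h)) (mem_sphere.1 hs)
  · exact fun hs => h (sphere_subset_closedBall hs)

lemma ci_inv_pow (c w : ℂ) {R : ℝ} (h0 : 0 ≤ R) (hw : w ∉ sphere c R) (A : ℂ) (n : ℕ) :
    CircleIntegrable (fun z => A * ((z - w) ^ n)⁻¹) c R := by
  refine ContinuousOn.circleIntegrable h0 ?_
  refine continuousOn_const.mul (ContinuousOn.inv₀
    ((continuousOn_id.sub continuousOn_const).pow n) fun z hz => ?_)
  exact pow_ne_zero n (sub_ne_zero.2 (ne_on_sphere hw hz))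

lemma ci_inv (c w : ℂ) {R : ℝ} (h0 : 0 ≤ R) (hw : w ∉ sphere c R) (A : ℂ) :
    CircleIntegrable (fun z => A * (z - w)⁻¹) c R := by
  simpa using ci_inv_pow c w h0 hw A 1

lemma cint_inv_out {c w : ℂ} {R : ℝ} (h0 : 0 ≤ R) (hw : w ∉ closedBall c R) :
    (∮ z in C(c, R), (z - w)⁻¹) = 0 := by
  refine Complex.circleIntegral_eq_zero_of_differentiable_on_off_countable h0
    Set.countable_empty ?_ ?_
  · refine ContinuousOn.inv₀ (continuousOn_id.sub continuousOn_const) fun z hz => ?_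
    exact sub_ne_zero.2 fun h => hw (h ▸ hz)
  · intro z hz
    have hzw : z ≠ w := fun h => hw (h ▸ ball_subset_closedBall hz.1)
    exact (differentiableAt_id.sub_const w).inv (sub_ne_zero.2 hzw)

lemma cint_inv_cases {c w : ℂ} {R : ℝ} (h0 : 0 ≤ R)
    (hw : w ∈ ball c R ∨ w ∉ closedBall c R) :
    (∮ z in C(c, R), (z - w)⁻¹) = if w ∈ ball c R then 2 * ↑π * I else 0 := by
  rcases hw with h | h
  · rw [if_pos h, circleIntegral.integral_sub_inv_of_mem_ball h]
  · rw [if_neg fun h' => h (ball_subset_closedBall h'), cint_inv_out h0 h]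

lemma cint_pow_inv (c w : ℂ) (R : ℝ) {n : ℕ} (hn : 2 ≤ n) :
    (∮ z in C(c, R), ((z - w) ^ n)⁻¹) = 0 := by
  have h := circleIntegral.integral_sub_zpow_of_ne (n := -(n : ℤ)) (by omega) c w R
  rw [← h]
  congr 1
  funext z
  rw [zpow_neg, zpow_natCast]

/-- Evaluation of `∮ (c₁(z-a)⁻¹ + c₂(z-w)⁻¹ + c₃((z-w)²)⁻¹)`. -/
lemma cint_three {c a w : ℂ} {R : ℝ} (hR : 0 < R) (c1 c2 c3 : ℂ)
    (ha : a ∈ ball c R ∨ a ∉ closedBall c R)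
    (hw : w ∈ ball c R ∨ w ∉ closedBall c R) :
    (∮ z in C(c, R), (c1 * (z - a)⁻¹ + (c2 * (z - w)⁻¹ + c3 * ((z - w) ^ 2)⁻¹))) =
      c1 * (if a ∈ ball c R then 2 * ↑π * I else 0) +
        c2 * (if w ∈ ball c R then 2 * ↑π * I else 0) := by
  have has := not_sphere_of_cases ha
  have hws := not_sphere_of_cases hw
  calc (∮ z in C(c, R), (c1 * (z - a)⁻¹ + (c2 * (z - w)⁻¹ + c3 * ((z - w) ^ 2)⁻¹)))
      = (∮ z in C(c, R), c1 * (z - a)⁻¹) +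
        ∮ z in C(c, R), (c2 * (z - w)⁻¹ + c3 * ((z - w) ^ 2)⁻¹) :=
        cint_add (ci_inv c a hR.le has c1)
          ((ci_inv c w hR.le hws c2).add (ci_inv_pow c w hR.le hws c3 2))
    _ = (∮ z in C(c, R), c1 * (z - a)⁻¹) +
        ((∮ z in C(c, R), c2 * (z - w)⁻¹) + ∮ z in C(c, R), c3 * ((z - w) ^ 2)⁻¹) := by
        rw [cint_add (ci_inv c w hR.le hws c2) (ci_inv_pow c w hR.le hws c3 2)]
    _ = c1 * (if a ∈ ball c R then 2 * ↑π * I else 0) +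
        c2 * (if w ∈ ball c R then 2 * ↑π * I else 0) := by
        rw [circleIntegral.integral_const_mul, circleIntegral.integral_const_mul,
          circleIntegral.integral_const_mul, cint_inv_cases hR.le ha,
          cint_inv_cases hR.le hw, cint_pow_inv c w R le_rfl, mul_zero, add_zero]

/-- `∮ a z /((a-z)(z-w)²)` over a circle avoiding both poles. -/
lemma cint_pole_pair {c a w : ℂ} {R : ℝ} (hR : 0 < R)
    (ha : a ∈ ball c R ∨ a ∉ closedBall c R)
    (hw : w ∈ ball c R ∨ w ∉ closedBall c R) (haw : a ≠ w) :
    (∮ z in C(c, R), a * z / ((a - z) * (z - w) ^ 2)) =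
      2 * ↑π * I * (a ^ 2 / (a - w) ^ 2) *
        ((if w ∈ ball c R then 1 else 0) - (if a ∈ ball c R then 1 else 0)) := by
  have hd : a - w ≠ 0 := sub_ne_zero.2 haw
  have has := not_sphere_of_cases ha
  have hws := not_sphere_of_cases hw
  have heq : Set.EqOn (fun z => a * z / ((a - z) * (z - w) ^ 2))
      (fun z => (-(a ^ 2 / (a - w) ^ 2)) * (z - a)⁻¹ +
        ((a ^ 2 / (a - w) ^ 2) * (z - w)⁻¹ +
          (a ^ 2 / (a - w) - a) * ((z - w) ^ 2)⁻¹)) (sphere c R) := by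
    intro z hz
    have hza : z - a ≠ 0 := sub_ne_zero.2 (ne_on_sphere has hz)
    have hzw : z - w ≠ 0 := sub_ne_zero.2 (ne_on_sphere hws hz)
    have haz : a - z ≠ 0 := by
      intro h
      exact hza (by linear_combination -h)
    have h1 : (a - z) * (z - w) ^ 2 ≠ 0 := mul_ne_zero haz (pow_ne_zero 2 hzw)
    rw [div_eq_iff h1]
    have e1 : (z - a)⁻¹ * (a - z) = -1 := by
      rw [show a - z = -(z - a) by ring, mul_neg, inv_mul_cancel₀ hza]
    have e2 : (z - w)⁻¹ * (z - w) ^ 2 = z - w := by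
      rw [sq, ← mul_assoc, inv_mul_cancel₀ hzw, one_mul]
    have e3 : ((z - w) ^ 2)⁻¹ * (z - w) ^ 2 = 1 := inv_mul_cancel₀ (pow_ne_zero 2 hzw)
    have expand : ((-(a ^ 2 / (a - w) ^ 2)) * (z - a)⁻¹ +
          ((a ^ 2 / (a - w) ^ 2) * (z - w)⁻¹ + (a ^ 2 / (a - w) - a) * ((z - w) ^ 2)⁻¹)) *
        ((a - z) * (z - w) ^ 2) =
        (-(a ^ 2 / (a - w) ^ 2)) * ((z - a)⁻¹ * (a - z)) * (z - w) ^ 2 +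
          ((a ^ 2 / (a - w) ^ 2) * ((z - w)⁻¹ * (z - w) ^ 2) * (a - z) +
            (a ^ 2 / (a - w) - a) * (((z - w) ^ 2)⁻¹ * (z - w) ^ 2) * (a - z)) := by ring
    rw [expand, e1, e2, e3]
    field_simp
    ring
  rw [circleIntegral.integral_congr hR.le heq, cint_three hR _ _ _ ha hw]
  split_ifs <;> ring

/-- `∮ z ((z-w)²)⁻¹` over a circle avoiding the pole. -/
lemma cint_z_inv_sq {c w : ℂ} {R : ℝ} (hR : 0 < R)
    (hw : w ∈ ball c R ∨ w ∉ closedBall c R) :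
    (∮ z in C(c, R), z * ((z - w) ^ 2)⁻¹) =
      if w ∈ ball c R then 2 * ↑π * I else 0 := by
  have hws := not_sphere_of_cases hw
  have heq : Set.EqOn (fun z => z * ((z - w) ^ 2)⁻¹)
      (fun z => (1 : ℂ) * (z - w)⁻¹ + w * ((z - w) ^ 2)⁻¹) (sphere c R) := by
    intro z hz
    have hzw : z - w ≠ 0 := sub_ne_zero.2 (ne_on_sphere hws hz)
    have e2 : (z - w)⁻¹ * (z - w) ^ 2 = z - w := by
      rw [sq, ← mul_assoc, inv_mul_cancel₀ hzw, one_mul]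
    have e3 : ((z - w) ^ 2)⁻¹ * (z - w) ^ 2 = 1 := inv_mul_cancel₀ (pow_ne_zero 2 hzw)
    have expand : ((1 : ℂ) * (z - w)⁻¹ + w * ((z - w) ^ 2)⁻¹) * (z - w) ^ 2 =
        (1 : ℂ) * ((z - w)⁻¹ * (z - w) ^ 2) + w * (((z - w) ^ 2)⁻¹ * (z - w) ^ 2) := by ring
    apply mul_right_cancel₀ (pow_ne_zero 2 hzw)
    rw [expand, e2, e3, mul_assoc, e3]
    ring
  calc (∮ z in C(c, R), z * ((z - w) ^ 2)⁻¹)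
      = ∮ z in C(c, R), ((1 : ℂ) * (z - w)⁻¹ + w * ((z - w) ^ 2)⁻¹) :=
        circleIntegral.integral_congr hR.le heq
    _ = (∮ z in C(c, R), (1 : ℂ) * (z - w)⁻¹) + ∮ z in C(c, R), w * ((z - w) ^ 2)⁻¹ :=
        cint_add (ci_inv c w hR.le hws 1) (ci_inv_pow c w hR.le hws w 2)
    _ = if w ∈ ball c R then 2 * ↑π * I else 0 := by
        rw [circleIntegral.integral_const_mul, circleIntegral.integral_const_mul,
          cint_inv_cases hR.le hw, cint_pow_inv c w R le_rfl, mul_zero, add_zero, one_mul]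

/-- `∮ w z /((w-z)(z-w)²) = 0` (third-order pole). -/
lemma cint_pole_cube {c w : ℂ} {R : ℝ} (hR : 0 < R) (hws : w ∉ sphere c R) :
    (∮ z in C(c, R), w * z / ((w - z) * (z - w) ^ 2)) = 0 := by
  have heq : Set.EqOn (fun z => w * z / ((w - z) * (z - w) ^ 2))
      (fun z => (-w) * ((z - w) ^ 2)⁻¹ + (-(w ^ 2)) * ((z - w) ^ 3)⁻¹) (sphere c R) := by
    intro z hz
    have hzw : z - w ≠ 0 := sub_ne_zero.2 (ne_on_sphere hws hz)
    have hwz : w - z ≠ 0 := by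
      intro h
      exact hzw (by linear_combination -h)
    have h1 : (w - z) * (z - w) ^ 2 ≠ 0 := mul_ne_zero hwz (pow_ne_zero 2 hzw)
    rw [div_eq_iff h1]
    have e3 : ((z - w) ^ 2)⁻¹ * (z - w) ^ 2 = 1 := inv_mul_cancel₀ (pow_ne_zero 2 hzw)
    have e4 : ((z - w) ^ 3)⁻¹ * (z - w) ^ 2 = (z - w)⁻¹ := by
      rw [pow_succ, mul_inv, mul_comm (((z - w) ^ 2)⁻¹) ((z - w)⁻¹), mul_assoc,
        inv_mul_cancel₀ (pow_ne_zero 2 hzw), mul_one]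
    have e5 : (z - w)⁻¹ * (w - z) = -1 := by
      rw [show w - z = -(z - w) by ring, mul_neg, inv_mul_cancel₀ hzw]
    have expand : ((-w) * ((z - w) ^ 2)⁻¹ + (-(w ^ 2)) * ((z - w) ^ 3)⁻¹) *
        ((w - z) * (z - w) ^ 2) =
        (-w) * (((z - w) ^ 2)⁻¹ * (z - w) ^ 2) * (w - z) +
          (-(w ^ 2)) * (((z - w) ^ 3)⁻¹ * (z - w) ^ 2 * (w - z)) := by ring
    rw [expand, e3, e4, e5]
    ring
  calc (∮ z in C(c, R), w * z / ((w - z) * (z - w) ^ 2))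
      = ∮ z in C(c, R), ((-w) * ((z - w) ^ 2)⁻¹ + (-(w ^ 2)) * ((z - w) ^ 3)⁻¹) :=
        circleIntegral.integral_congr hR.le heq
    _ = (∮ z in C(c, R), (-w) * ((z - w) ^ 2)⁻¹) +
        ∮ z in C(c, R), (-(w ^ 2)) * ((z - w) ^ 3)⁻¹ :=
        cint_add (ci_inv_pow c w hR.le hws _ 2) (ci_inv_pow c w hR.le hws _ 3)
    _ = 0 := by
        rw [circleIntegral.integral_const_mul, circleIntegral.integral_const_mul,
          cint_pow_inv c w R le_rfl, cint_pow_inv c w R (by norm_num), mul_zero, mul_zero,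
          add_zero]

end I2Aux

open I2Aux

/-- Proposition 1 of the paper (case `m = n`, eq. (97)): the evaluation of the double contour
integral `I₂` over two concentric circles `C = C(x₀, r)` and `C' = C(x₀, r')` with `r < r'`,
where the inner circle encloses exactly the eigenvalues indexed by `𝒩_m` and all other
eigenvalues lie outside the outer circle. -/
theorem I2_diagonal
    (N K : ℕ) (hN : 0 < N) (hNK : N ≤ K)
    (ρ : Fin N → ℝ) (hρ : ∀ i, 0 < ρ i) (hinj : Function.Injective ρ)
    (B : ℂ → ℂ)
    (hB : ∀ z, B z = -(1 / (K : ℂ)) * ∑ i, (ρ i : ℂ) * z / ((ρ i : ℂ) - z) -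
        (((K : ℂ) - (N : ℂ)) / (K : ℂ)) * z)
    (𝒩m : Finset (Fin N)) (h𝒩m : 𝒩m.Nonempty)
    (x₀ r r' : ℝ) (hr : 0 < r) (hrr' : r < r')
    (hin : ∀ k ∈ 𝒩m, |ρ k - x₀| < r)
    (hout : ∀ i ∉ 𝒩m, r' < |ρ i - x₀|) :
    (1 / (2 * (π : ℂ) * Complex.I)) ^ 2 *
        (∮ z₂ in C((x₀ : ℂ), r'), ∮ z₁ in C((x₀ : ℂ), r),
          -(B z₁ * B z₂) / (z₁ - z₂) ^ 2) =
      (1 / (K : ℂ) ^ 2) *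
        ((∑ k ∈ 𝒩m, ∑ l ∈ 𝒩mᶜ,
            (ρ k : ℂ) ^ 2 * (ρ l : ℂ) ^ 2 / ((ρ k : ℂ) - (ρ l : ℂ)) ^ 2) +
          ((K : ℂ) - (N : ℂ)) * ∑ k ∈ 𝒩m, (ρ k : ℂ) ^ 2) := by
  classical
  have hr' : 0 < r' := hr.trans hrr'
  have hK : 0 < K := lt_of_lt_of_le hN hNK
  have hKc : (K : ℂ) ≠ 0 := Nat.cast_ne_zero.2 hK.ne'
  have hπ : ((π : ℝ) : ℂ) ≠ 0 := Complex.ofReal_ne_zero.2 Real.pi_ne_zero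
  have hI : Complex.I ≠ 0 := Complex.I_ne_zero
  -- distances
  have hd : ∀ i : Fin N, dist ((ρ i : ℝ) : ℂ) ((x₀ : ℝ) : ℂ) = |ρ i - x₀| := by
    intro i
    rw [Complex.dist_eq, ← Complex.ofReal_sub, Complex.norm_real, Real.norm_eq_abs]
  -- membership facts
  have hball_r : ∀ k ∈ 𝒩m, ((ρ k : ℝ) : ℂ) ∈ ball (x₀ : ℂ) r := by
    intro k hk; rw [mem_ball, hd]; exact hin k hk
  have hball_r' : ∀ k ∈ 𝒩m, ((ρ k : ℝ) : ℂ) ∈ ball (x₀ : ℂ) r' := by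
    intro k hk; rw [mem_ball, hd]; exact (hin k hk).trans hrr'
  have hout_r : ∀ i ∉ 𝒩m, ((ρ i : ℝ) : ℂ) ∉ closedBall (x₀ : ℂ) r := by
    intro i hi; rw [mem_closedBall, hd]
    exact not_le.2 (hrr'.trans (hout i hi))
  have hout_r' : ∀ i ∉ 𝒩m, ((ρ i : ℝ) : ℂ) ∉ closedBall (x₀ : ℂ) r' := by
    intro i hi; rw [mem_closedBall, hd]
    exact not_le.2 (hout i hi)
  have hcase_r : ∀ i : Fin N,
      ((ρ i : ℝ) : ℂ) ∈ ball (x₀ : ℂ) r ∨ ((ρ i : ℝ) : ℂ) ∉ closedBall (x₀ : ℂ) r := by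
    intro i
    by_cases hi : i ∈ 𝒩m
    · exact Or.inl (hball_r i hi)
    · exact Or.inr (hout_r i hi)
  have hcase_r' : ∀ i : Fin N,
      ((ρ i : ℝ) : ℂ) ∈ ball (x₀ : ℂ) r' ∨ ((ρ i : ℝ) : ℂ) ∉ closedBall (x₀ : ℂ) r' := by
    intro i
    by_cases hi : i ∈ 𝒩m
    · exact Or.inl (hball_r' i hi)
    · exact Or.inr (hout_r' i hi)
  have hsph_r : ∀ i : Fin N, ((ρ i : ℝ) : ℂ) ∉ sphere (x₀ : ℂ) r :=
    fun i => not_sphere_of_cases (hcase_r i)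
  have hsph_r' : ∀ i : Fin N, ((ρ i : ℝ) : ℂ) ∉ sphere (x₀ : ℂ) r' :=
    fun i => not_sphere_of_cases (hcase_r' i)
  have hρne : ∀ k l : Fin N, k ≠ l → ((ρ k : ℝ) : ℂ) ≠ ((ρ l : ℝ) : ℂ) := by
    intro k l hkl h
    exact hkl (hinj (by exact_mod_cast h))
  -- the inner integral
  have inner : ∀ z₂ ∈ sphere (x₀ : ℂ) r',
      (∮ z₁ in C((x₀ : ℂ), r), -(B z₁ * B z₂) / (z₁ - z₂) ^ 2) =
        2 * ↑π * Complex.I * (1 / (K : ℂ)) *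
          ((-(B z₂)) * ∑ k ∈ 𝒩m, (ρ k : ℂ) ^ 2 / ((ρ k : ℂ) - z₂) ^ 2) := by
    intro z₂ hz₂
    have hz₂d : dist z₂ (x₀ : ℂ) = r' := mem_sphere.1 hz₂
    have hz₂cb : z₂ ∉ closedBall (x₀ : ℂ) r := by
      rw [mem_closedBall, hz₂d]; exact not_le.2 hrr'
    have hz₂or : z₂ ∈ ball (x₀ : ℂ) r ∨ z₂ ∉ closedBall (x₀ : ℂ) r := Or.inr hz₂cb
    have hz₂b : z₂ ∉ ball (x₀ : ℂ) r := fun h => hz₂cb (ball_subset_closedBall h)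
    have hz₂sph : z₂ ∉ sphere (x₀ : ℂ) r := not_sphere_of_cases hz₂or
    have hρz₂ : ∀ i : Fin N, ((ρ i : ℝ) : ℂ) ≠ z₂ := by
      intro i h
      have h2 := hd i
      rw [h, hz₂d] at h2
      by_cases hi : i ∈ 𝒩m
      · have := hin i hi; linarith
      · have := hout i hi; linarith
    have e0 : (fun z₁ => -(B z₁ * B z₂) / (z₁ - z₂) ^ 2) =
        fun z₁ => (-(B z₂)) * (B z₁ / (z₁ - z₂) ^ 2) := by
      funext z₁; ring
    rw [e0, circleIntegral.integral_const_mul]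
    have e2 : (fun z₁ => B z₁ / (z₁ - z₂) ^ 2) =
        fun z₁ => (∑ i : Fin N, (-(1 / (K : ℂ))) *
            ((ρ i : ℂ) * z₁ / (((ρ i : ℂ) - z₁) * (z₁ - z₂) ^ 2))) +
          (-(((K : ℂ) - (N : ℂ)) / (K : ℂ))) * (z₁ * ((z₁ - z₂) ^ 2)⁻¹) := by
      funext z₁
      rw [hB z₁, sub_div, mul_div_assoc, Finset.sum_div, Finset.mul_sum, sub_eq_add_neg]
      congr 1
      · exact Finset.sum_congr rfl fun i _ => by rw [div_div]
      · ring
    have hTint : ∀ i : Fin N, CircleIntegrable (fun z₁ => (-(1 / (K : ℂ))) *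
        ((ρ i : ℂ) * z₁ / (((ρ i : ℂ) - z₁) * (z₁ - z₂) ^ 2))) (x₀ : ℂ) r := by
      intro i
      refine ContinuousOn.circleIntegrable hr.le ?_
      refine continuousOn_const.mul (ContinuousOn.div
        (continuousOn_const.mul continuousOn_id)
        ((continuousOn_const.sub continuousOn_id).mul
          ((continuousOn_id.sub continuousOn_const).pow 2)) fun z hz => ?_)
      refine mul_ne_zero ?_ (pow_ne_zero 2 (sub_ne_zero.2 (ne_on_sphere hz₂sph hz)))
      intro h
      exact (ne_on_sphere (hsph_r i) hz).symm (by linear_combination h)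
    have hTi : ∀ i : Fin N,
        (∮ z₁ in C((x₀ : ℂ), r), (-(1 / (K : ℂ))) *
            ((ρ i : ℂ) * z₁ / (((ρ i : ℂ) - z₁) * (z₁ - z₂) ^ 2))) =
          if i ∈ 𝒩m then
            2 * ↑π * Complex.I * (1 / (K : ℂ)) * ((ρ i : ℂ) ^ 2 / ((ρ i : ℂ) - z₂) ^ 2)
          else 0 := by
      intro i
      rw [circleIntegral.integral_const_mul,
        cint_pole_pair hr (hcase_r i) hz₂or (hρz₂ i), if_neg hz₂b]
      by_cases hi : i ∈ 𝒩m
      · rw [if_pos hi, if_pos (hball_r i hi)]; ring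
      · rw [if_neg hi, if_neg fun h => hout_r i hi (ball_subset_closedBall h)]; ring
    have J : (∮ z₁ in C((x₀ : ℂ), r), B z₁ / (z₁ - z₂) ^ 2) =
        2 * ↑π * Complex.I * (1 / (K : ℂ)) *
          ∑ k ∈ 𝒩m, (ρ k : ℂ) ^ 2 / ((ρ k : ℂ) - z₂) ^ 2 := by
      rw [e2]
      have step1 : (∮ z₁ in C((x₀ : ℂ), r),
          ((∑ i : Fin N, (-(1 / (K : ℂ))) *
              ((ρ i : ℂ) * z₁ / (((ρ i : ℂ) - z₁) * (z₁ - z₂) ^ 2))) +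
            (-(((K : ℂ) - (N : ℂ)) / (K : ℂ))) * (z₁ * ((z₁ - z₂) ^ 2)⁻¹))) =
          (∮ z₁ in C((x₀ : ℂ), r), ∑ i : Fin N, (-(1 / (K : ℂ))) *
              ((ρ i : ℂ) * z₁ / (((ρ i : ℂ) - z₁) * (z₁ - z₂) ^ 2))) +
          ∮ z₁ in C((x₀ : ℂ), r),
            (-(((K : ℂ) - (N : ℂ)) / (K : ℂ))) * (z₁ * ((z₁ - z₂) ^ 2)⁻¹) := by
        refine cint_add (ciSum Finset.univ fun i _ => hTint i) ?_
        refine ContinuousOn.circleIntegrable hr.le ?_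
        refine continuousOn_const.mul (continuousOn_id.mul (ContinuousOn.inv₀
          ((continuousOn_id.sub continuousOn_const).pow 2) fun z hz => ?_))
        exact pow_ne_zero 2 (sub_ne_zero.2 (ne_on_sphere hz₂sph hz))
      rw [step1]
      have step2 : (∮ z₁ in C((x₀ : ℂ), r), ∑ i : Fin N, (-(1 / (K : ℂ))) *
          ((ρ i : ℂ) * z₁ / (((ρ i : ℂ) - z₁) * (z₁ - z₂) ^ 2))) =
          ∑ i : Fin N, ∮ z₁ in C((x₀ : ℂ), r), (-(1 / (K : ℂ))) *
            ((ρ i : ℂ) * z₁ / (((ρ i : ℂ) - z₁) * (z₁ - z₂) ^ 2)) :=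
        cint_sum Finset.univ fun i _ => hTint i
      rw [step2]
      have step3 : (∮ z₁ in C((x₀ : ℂ), r),
          (-(((K : ℂ) - (N : ℂ)) / (K : ℂ))) * (z₁ * ((z₁ - z₂) ^ 2)⁻¹)) = 0 := by
        rw [circleIntegral.integral_const_mul, cint_z_inv_sq hr hz₂or, if_neg hz₂b, mul_zero]
      rw [step3, add_zero]
      simp only [hTi]
      rw [Fintype.sum_ite_mem, Finset.mul_sum]
    rw [J]
    ring
  -- rewrite the outer integrand using `inner`
  rw [circleIntegral.integral_congr hr'.le fun z₂ hz₂ => inner z₂ hz₂,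
    circleIntegral.integral_const_mul]
  -- the outer integral
  have hBc : ContinuousOn B (sphere (x₀ : ℂ) r') := by
    have hg : ContinuousOn (fun z : ℂ =>
        -(1 / (K : ℂ)) * ∑ i : Fin N, (ρ i : ℂ) * z / ((ρ i : ℂ) - z) -
          (((K : ℂ) - (N : ℂ)) / (K : ℂ)) * z) (sphere (x₀ : ℂ) r') := by
      refine ContinuousOn.sub (continuousOn_const.mul ?_) (continuousOn_const.mul continuousOn_id)
      refine continuousOn_finset_sum _ fun i _ => ?_
      refine ContinuousOn.div (continuousOn_const.mul continuousOn_id)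
        (continuousOn_const.sub continuousOn_id) fun z hz => ?_
      intro h
      exact (ne_on_sphere (hsph_r' i) hz).symm (by linear_combination h)
    exact hg.congr fun z _ => hB z
  have outer : (∮ z₂ in C((x₀ : ℂ), r'),
      (-(B z₂)) * ∑ k ∈ 𝒩m, (ρ k : ℂ) ^ 2 / ((ρ k : ℂ) - z₂) ^ 2) =
      2 * ↑π * Complex.I * ∑ k ∈ 𝒩m,
        ((1 / (K : ℂ)) * ∑ l ∈ 𝒩mᶜ,
            (ρ k : ℂ) ^ 2 * (ρ l : ℂ) ^ 2 / ((ρ k : ℂ) - (ρ l : ℂ)) ^ 2 +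
          (((K : ℂ) - (N : ℂ)) / (K : ℂ)) * (ρ k : ℂ) ^ 2) := by
    have e3 : (fun z₂ => (-(B z₂)) * ∑ k ∈ 𝒩m, (ρ k : ℂ) ^ 2 / ((ρ k : ℂ) - z₂) ^ 2) =
        fun z₂ => ∑ k ∈ 𝒩m, (-(B z₂)) * ((ρ k : ℂ) ^ 2 / ((ρ k : ℂ) - z₂) ^ 2) := by
      funext z₂; rw [Finset.mul_sum]
    rw [e3]
    have hker : ∀ k ∈ 𝒩m, CircleIntegrable
        (fun z₂ => (-(B z₂)) * ((ρ k : ℂ) ^ 2 / ((ρ k : ℂ) - z₂) ^ 2)) (x₀ : ℂ) r' := by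
      intro k _
      refine ContinuousOn.circleIntegrable hr'.le ?_
      refine hBc.neg.mul (ContinuousOn.div continuousOn_const
        ((continuousOn_const.sub continuousOn_id).pow 2) fun z hz => ?_)
      refine pow_ne_zero 2 ?_
      intro h
      exact (ne_on_sphere (hsph_r' k) hz).symm (by linear_combination h)
    have step1 := cint_sum 𝒩m hker
    rw [step1]
    have hk' : ∀ k ∈ 𝒩m, (∮ z₂ in C((x₀ : ℂ), r'),
        (-(B z₂)) * ((ρ k : ℂ) ^ 2 / ((ρ k : ℂ) - z₂) ^ 2)) =
        2 * ↑π * Complex.I *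
          ((1 / (K : ℂ)) * ∑ l ∈ 𝒩mᶜ,
              (ρ k : ℂ) ^ 2 * (ρ l : ℂ) ^ 2 / ((ρ k : ℂ) - (ρ l : ℂ)) ^ 2 +
            (((K : ℂ) - (N : ℂ)) / (K : ℂ)) * (ρ k : ℂ) ^ 2) := by
      intro k hk
      have hkball : ((ρ k : ℝ) : ℂ) ∈ ball (x₀ : ℂ) r' := hball_r' k hk
      have hkor : ((ρ k : ℝ) : ℂ) ∈ ball (x₀ : ℂ) r' ∨
          ((ρ k : ℝ) : ℂ) ∉ closedBall (x₀ : ℂ) r' := Or.inl hkball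
      have e4 : (fun z : ℂ => (-(B z)) * ((ρ k : ℂ) ^ 2 / ((ρ k : ℂ) - z) ^ 2)) =
          fun z => (∑ l : Fin N, ((1 / (K : ℂ)) * (ρ k : ℂ) ^ 2) *
              ((ρ l : ℂ) * z / (((ρ l : ℂ) - z) * (z - (ρ k : ℂ)) ^ 2))) +
            ((((K : ℂ) - (N : ℂ)) / (K : ℂ)) * (ρ k : ℂ) ^ 2) *
              (z * ((z - (ρ k : ℂ)) ^ 2)⁻¹) := by
        funext z
        rw [hB z]
        have hu : ∀ l : Fin N, ((1 / (K : ℂ)) * (ρ k : ℂ) ^ 2) *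
            ((ρ l : ℂ) * z / (((ρ l : ℂ) - z) * (z - (ρ k : ℂ)) ^ 2)) =
            ((1 / (K : ℂ)) * ((ρ l : ℂ) * z / ((ρ l : ℂ) - z))) *
              ((ρ k : ℂ) ^ 2 / ((ρ k : ℂ) - z) ^ 2) := by
          intro l
          have b1 : (ρ l : ℂ) * z / (((ρ l : ℂ) - z) * (z - (ρ k : ℂ)) ^ 2) =
              (ρ l : ℂ) * z * (((ρ l : ℂ) - z)⁻¹ * ((z - (ρ k : ℂ)) ^ 2)⁻¹) := by
            rw [div_eq_mul_inv, mul_inv]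
          have b2 : (ρ l : ℂ) * z / ((ρ l : ℂ) - z) =
              (ρ l : ℂ) * z * ((ρ l : ℂ) - z)⁻¹ := div_eq_mul_inv _ _
          have b3 : (ρ k : ℂ) ^ 2 / ((ρ k : ℂ) - z) ^ 2 =
              (ρ k : ℂ) ^ 2 * ((z - (ρ k : ℂ)) ^ 2)⁻¹ := by
            rw [show ((ρ k : ℂ) - z) ^ 2 = (z - (ρ k : ℂ)) ^ 2 from by ring, div_eq_mul_inv]
          rw [b1, b2, b3]
          ring
        simp only [hu]
        rw [← Finset.sum_mul, ← Finset.mul_sum]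
        ring
      rw [e4]
      have hUint : ∀ l : Fin N, CircleIntegrable
          (fun z => ((1 / (K : ℂ)) * (ρ k : ℂ) ^ 2) *
            ((ρ l : ℂ) * z / (((ρ l : ℂ) - z) * (z - (ρ k : ℂ)) ^ 2))) (x₀ : ℂ) r' := by
        intro l
        refine ContinuousOn.circleIntegrable hr'.le ?_
        refine continuousOn_const.mul (ContinuousOn.div
          (continuousOn_const.mul continuousOn_id)
          ((continuousOn_const.sub continuousOn_id).mul
            ((continuousOn_id.sub continuousOn_const).pow 2)) fun z hz => ?_)
        refine mul_ne_zero ?_ ?_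
        · intro h
          exact (ne_on_sphere (hsph_r' l) hz).symm (by linear_combination h)
        · exact pow_ne_zero 2 (sub_ne_zero.2 (ne_on_sphere (hsph_r' k) hz))
      have step2 : (∮ z in C((x₀ : ℂ), r'),
          ((∑ l : Fin N, ((1 / (K : ℂ)) * (ρ k : ℂ) ^ 2) *
              ((ρ l : ℂ) * z / (((ρ l : ℂ) - z) * (z - (ρ k : ℂ)) ^ 2))) +
            ((((K : ℂ) - (N : ℂ)) / (K : ℂ)) * (ρ k : ℂ) ^ 2) *
              (z * ((z - (ρ k : ℂ)) ^ 2)⁻¹))) =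
          (∮ z in C((x₀ : ℂ), r'), ∑ l : Fin N, ((1 / (K : ℂ)) * (ρ k : ℂ) ^ 2) *
              ((ρ l : ℂ) * z / (((ρ l : ℂ) - z) * (z - (ρ k : ℂ)) ^ 2))) +
          ∮ z in C((x₀ : ℂ), r'),
            ((((K : ℂ) - (N : ℂ)) / (K : ℂ)) * (ρ k : ℂ) ^ 2) *
              (z * ((z - (ρ k : ℂ)) ^ 2)⁻¹) := by
        refine cint_add (ciSum Finset.univ fun l _ => hUint l) ?_
        refine ContinuousOn.circleIntegrable hr'.le ?_
        refine continuousOn_const.mul (continuousOn_id.mul (ContinuousOn.inv₀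
          ((continuousOn_id.sub continuousOn_const).pow 2) fun z hz => ?_))
        exact pow_ne_zero 2 (sub_ne_zero.2 (ne_on_sphere (hsph_r' k) hz))
      rw [step2]
      have step3 := cint_sum Finset.univ fun l (_ : l ∈ Finset.univ) => hUint l
      rw [step3]
      have hUl : ∀ l : Fin N, (∮ z in C((x₀ : ℂ), r'),
          ((1 / (K : ℂ)) * (ρ k : ℂ) ^ 2) *
            ((ρ l : ℂ) * z / (((ρ l : ℂ) - z) * (z - (ρ k : ℂ)) ^ 2))) =
          if l ∈ 𝒩mᶜ then
            2 * ↑π * Complex.I * ((1 / (K : ℂ)) *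
              ((ρ k : ℂ) ^ 2 * (ρ l : ℂ) ^ 2 / ((ρ k : ℂ) - (ρ l : ℂ)) ^ 2))
          else 0 := by
        intro l
        rw [circleIntegral.integral_const_mul]
        by_cases hlk : l = k
        · subst hlk
          rw [cint_pole_cube hr' (hsph_r' l), mul_zero,
            if_neg (by simpa using hk)]
        · rw [cint_pole_pair hr' (hcase_r' l) hkor (hρne l k hlk), if_pos hkball]
          by_cases hl : l ∈ 𝒩m
          · rw [if_pos (hball_r' l hl), if_neg (by simpa using hl)]
            ring
          · rw [if_neg fun h => hout_r' l hl (ball_subset_closedBall h),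
              if_pos (by simpa using hl)]
            rw [show ((ρ k : ℂ) - (ρ l : ℂ)) ^ 2 = ((ρ l : ℂ) - (ρ k : ℂ)) ^ 2 from by ring]
            ring
      simp only [hUl]
      rw [Fintype.sum_ite_mem, Finset.mul_sum]
      have step4 : (∮ z in C((x₀ : ℂ), r'),
          ((((K : ℂ) - (N : ℂ)) / (K : ℂ)) * (ρ k : ℂ) ^ 2) *
            (z * ((z - (ρ k : ℂ)) ^ 2)⁻¹)) =
          ((((K : ℂ) - (N : ℂ)) / (K : ℂ)) * (ρ k : ℂ) ^ 2) * (2 * ↑π * Complex.I) := by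
        rw [circleIntegral.integral_const_mul, cint_z_inv_sq hr' hkor, if_pos hkball]
      rw [step4, ← Finset.mul_sum]
      ring
    rw [Finset.sum_congr rfl hk', ← Finset.mul_sum]
  rw [outer]
  have hsum : ∑ k ∈ 𝒩m, ((1 / (K : ℂ)) * ∑ l ∈ 𝒩mᶜ,
        (ρ k : ℂ) ^ 2 * (ρ l : ℂ) ^ 2 / ((ρ k : ℂ) - (ρ l : ℂ)) ^ 2 +
      (((K : ℂ) - (N : ℂ)) / (K : ℂ)) * (ρ k : ℂ) ^ 2) =
      (1 / (K : ℂ)) * (∑ k ∈ 𝒩m, ∑ l ∈ 𝒩mᶜ,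
          (ρ k : ℂ) ^ 2 * (ρ l : ℂ) ^ 2 / ((ρ k : ℂ) - (ρ l : ℂ)) ^ 2) +
        (((K : ℂ) - (N : ℂ)) / (K : ℂ)) * ∑ k ∈ 𝒩m, (ρ k : ℂ) ^ 2 := by
    rw [Finset.sum_add_distrib, ← Finset.mul_sum, ← Finset.mul_sum]
  rw [hsum]
  field_simp
end
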